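/- arXiv:1306.1957 — 3 statements merged into one kernel-verified Lean document; each statement's English description precedes it below -/
import Mathlib

section
/- Every block graph (a graph in which every maximal biconnected component is a clique) belongs to c-AND(1). -/
/-- An `AND(1)`-realization of `G`: each vertex `v` gets a closed interval
`[L v, R v]` and a representative point `p v` in it, with adjacency of distinct
vertices iff mutual containment of the representative points. -/
def IsAND1Real {V : Type*} (G : SimpleGraph V) (L R p : V → ℝ) : Prop :=
  (∀ v, L v ≤ p v ∧ p v ≤ R v) ∧
    ∀ u v : V, u ≠ v →
      (G.Adj u v ↔ L u ≤ p v ∧ p v ≤ R u ∧ L v ≤ p u ∧ p u ≤ R v)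

/-- A central (`c`-)`AND(1)`-realization: moreover each representative point is
the midpoint of its interval. -/
def IsCAND1Real {V : Type*} (G : SimpleGraph V) (L R p : V → ℝ) : Prop :=
  IsAND1Real G L R p ∧ ∀ v, p v = (L v + R v) / 2

/-- The class `AND(1)`. -/
def InAND1 {V : Type*} (G : SimpleGraph V) : Prop :=
  ∃ L R p : V → ℝ, IsAND1Real G L R p

/-- The class `c-AND(1)`. -/
def InCAND1 {V : Type*} (G : SimpleGraph V) : Prop :=
  ∃ L R p : V → ℝ, IsCAND1Real G L R p

/-- A linear ordering of the vertices (an injective map to `ℝ`) satisfying the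
four point condition: `x < u < v < y` with `xv, uy ∈ E` implies `uv ∈ E`. -/
def FourPointCond {V : Type*} (G : SimpleGraph V) (f : V → ℝ) : Prop :=
  Function.Injective f ∧
    ∀ x u v y : V, f x < f u → f u < f v → f v < f y →
      G.Adj x v → G.Adj u y → G.Adj u v

/-- `S` induces a biconnected subgraph of `G`: the induced subgraph is
connected and remains connected after deleting any single vertex. -/
def IsBiconnSet {V : Type*} (G : SimpleGraph V) (S : Set V) : Prop :=
  (SimpleGraph.induce S G).Connected ∧
    ∀ v ∈ S, (SimpleGraph.induce (S \ {v}) G).Connected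

/-- `S` is a block of `G`: a maximal biconnected set of vertices. -/
def IsBlockSet {V : Type*} (G : SimpleGraph V) (S : Set V) : Prop :=
  IsBiconnSet G S ∧ ∀ T : Set V, IsBiconnSet G T → S ⊆ T → T = S

namespace CAND1Aux

open SimpleGraph

variable {V : Type*} (G : SimpleGraph V)

/-- There is a walk from `a` to `b` all of whose vertices lie in `S`. -/
def WalkIn (S : Set V) (a b : V) : Prop :=
  ∃ w : G.Walk a b, ∀ x ∈ w.support, x ∈ S

variable {G}

lemma WalkIn.mono {S T : Set V} (hST : S ⊆ T) {a b : V} (h : WalkIn G S a b) :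
    WalkIn G T a b := by
  obtain ⟨w, hw⟩ := h
  exact ⟨w, fun x hx => hST (hw x hx)⟩

lemma walkIn_refl {S : Set V} {a : V} (ha : a ∈ S) : WalkIn G S a a :=
  ⟨Walk.nil, by simpa using ha⟩

lemma WalkIn.symm {S : Set V} {a b : V} (h : WalkIn G S a b) : WalkIn G S b a := by
  obtain ⟨w, hw⟩ := h
  exact ⟨w.reverse, fun x hx => hw x (by simpa using hx)⟩

lemma WalkIn.trans {S : Set V} {a b c : V} (h1 : WalkIn G S a b) (h2 : WalkIn G S b c) :
    WalkIn G S a c := by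
  obtain ⟨w1, hw1⟩ := h1
  obtain ⟨w2, hw2⟩ := h2
  refine ⟨w1.append w2, fun x hx => ?_⟩
  rw [Walk.mem_support_append_iff] at hx
  exact hx.elim (hw1 x) (hw2 x)

lemma walkIn_of_adj {S : Set V} {a b : V} (h : G.Adj a b) (ha : a ∈ S) (hb : b ∈ S) :
    WalkIn G S a b :=
  ⟨Walk.cons h Walk.nil, by simp [ha, hb]⟩

lemma mem_of_walkIn_left {S : Set V} {a b : V} (h : WalkIn G S a b) : a ∈ S := by
  obtain ⟨w, hw⟩ := h; exact hw a w.start_mem_support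

lemma reach_induce {S : Set V} : ∀ {a b : V} (w : G.Walk a b),
    (∀ x ∈ w.support, x ∈ S) → ∀ (ha : a ∈ S) (hb : b ∈ S),
    (SimpleGraph.induce S G).Reachable ⟨a, ha⟩ ⟨b, hb⟩ := by
  intro a b w
  induction w with
  | nil => intro _ ha hb; rfl
  | @cons x y z hxy w ih =>
    intro hsup ha hb
    have hy : y ∈ S := hsup y (by simp)
    have h1 : (SimpleGraph.induce S G).Adj ⟨x, ha⟩ ⟨y, hy⟩ := by
      simpa using hxy
    exact h1.reachable.trans (ih (fun t ht => hsup t (by simp [ht])) hy hb)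

/-- Walk-based connectivity implies connectivity of the induced subgraph. -/
lemma connected_induce_of {S : Set V} (hne : S.Nonempty)
    (h : ∀ a ∈ S, ∀ b ∈ S, WalkIn G S a b) : (SimpleGraph.induce S G).Connected := by
  rw [connected_iff]
  refine ⟨fun a b => ?_, ⟨⟨hne.choose, hne.choose_spec⟩⟩⟩
  obtain ⟨w, hw⟩ := h a a.2 b b.2
  have := reach_induce w hw a.2 b.2
  simpa using this


section TakeUntil
variable [DecidableEq V]

lemma not_end_mem_takeUntil {u x a : V} {Q : G.Walk u x} (hQ : Q.IsPath)
    (ha : a ∈ Q.support) (hax : a ≠ x) : x ∉ (Q.takeUntil a ha).support := by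
  intro hx
  have hspec := Q.take_spec ha
  have hnodup : Q.support.Nodup := hQ.support_nodup
  rw [← hspec, Walk.support_append] at hnodup
  have hdisj := List.disjoint_of_nodup_append hnodup
  have hxdrop : x ∈ (Q.dropUntil a ha).support := Walk.end_mem_support _
  rw [Walk.support_eq_cons] at hxdrop
  rcases List.mem_cons.mp hxdrop with h1 | h2
  · exact hax h1.symm
  · exact hdisj hx h2

end TakeUntil

section Biconn
variable [Fintype V]

lemma clique_of_biconn (h : ∀ S : Set V, IsBlockSet G S → G.IsClique S)
    {S : Set V} (hS : IsBiconnSet G S) : G.IsClique S := by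
  classical
  set fam : Set (Set V) := {T | IsBiconnSet G T ∧ S ⊆ T} with hfam
  have hfin : fam.Finite := Set.toFinite _
  have hne : fam.Nonempty := ⟨S, hS, subset_rfl⟩
  obtain ⟨T, hT, hmax⟩ := Set.Finite.exists_maximalFor (fun T => T) fam hfin hne
  have hblock : IsBlockSet G T := by
    refine ⟨hT.1, fun T' hT' hTT' => ?_⟩
    have : T' ∈ fam := ⟨hT', hT.2.trans hTT'⟩
    exact Set.Subset.antisymm (hmax this hTT') hTT'
  exact (h T hblock).subset hT.2

end Biconn

/-- If `u, w` are both neighbours of `v` and are joined by a walk avoiding `v`,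
then in a block graph they are adjacent. -/
lemma adj_of_detour [Fintype V] (hbg : ∀ S : Set V, IsBlockSet G S → G.IsClique S)
    {u v w : V} (hu : G.Adj v u) (hw : G.Adj v w) (huw : u ≠ w)
    (hd : WalkIn G {x | x ≠ v} u w) : G.Adj u w := by
  classical
  obtain ⟨w0, hw0⟩ := hd
  set P : G.Walk u w := w0.bypass with hPdef
  have hP : P.IsPath := w0.bypass_isPath
  have hPv : ∀ x ∈ P.support, x ≠ v := fun x hx =>
    hw0 x (w0.support_bypass_subset hx)
  set S : Set V := insert v {y | y ∈ P.support} with hSdef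
  have huS : u ∈ S := Or.inr P.start_mem_support
  have hwS : w ∈ S := Or.inr P.end_mem_support
  have hvS : v ∈ S := Or.inl rfl
  -- segment towards u inside the support of P
  have seg : ∀ a (ha : a ∈ P.support), WalkIn G {y | y ∈ P.support} a u := by
    intro a ha
    refine ⟨(P.takeUntil a ha).reverse, fun x hx => ?_⟩
    rw [Walk.support_reverse, List.mem_reverse] at hx
    exact P.support_takeUntil_subset ha hx
  have hconnS : ∀ a ∈ S, WalkIn G S a v := by
    intro a haS
    rcases haS with rfl | ha
    · exact walkIn_refl hvS
    · exact ((seg a ha).mono (fun y hy => Or.inr hy)).trans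
        (walkIn_of_adj hu.symm huS hvS)
  have hbic : IsBiconnSet G S := by
    constructor
    · exact connected_induce_of ⟨v, hvS⟩ fun a ha b hb =>
        (hconnS a ha).trans (hconnS b hb).symm
    · intro x hxS
      rcases hxS with rfl | hxP
      · -- delete v : the rest is the support of P
        have hEq : S \ {x} = {y | y ∈ P.support} := by
          ext y
          constructor
          · rintro ⟨(rfl | hy), hyx⟩
            · exact absurd rfl hyx
            · exact hy
          · intro hy
            exact ⟨Or.inr hy, hPv y hy⟩
        rw [hEq]
        exact connected_induce_of ⟨u, P.start_mem_support⟩ fun a ha b hb =>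
          (seg a ha).trans (seg b hb).symm
      · -- delete x from the support of the path
        have hxv : x ≠ v := hPv x hxP
        have hvS' : v ∈ S \ {x} := ⟨hvS, fun hh => hxv (Set.mem_singleton_iff.mp hh).symm⟩
        have key : ∀ a ∈ S \ {x}, WalkIn G (S \ {x}) a v := by
          rintro a ⟨haS, hax'⟩
          have hax : a ≠ x := by simpa using hax'
          rcases haS with rfl | haP
          · exact walkIn_refl hvS'
          · -- a is on P; go to u or to w avoiding x
            have hsplit : a ∈ (P.takeUntil x hxP).support ∨
                a ∈ (P.dropUntil x hxP).support := by
              rw [← Walk.mem_support_append_iff, Walk.take_spec]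
              exact haP
            rcases hsplit with haQ | haR
            · -- prefix side: go to u
              set Q := P.takeUntil x hxP with hQ
              have hQpath : Q.IsPath := hP.takeUntil hxP
              have hxQ : x ∉ (Q.takeUntil a haQ).support :=
                not_end_mem_takeUntil hQpath haQ hax
              have hwalk : WalkIn G (S \ {x}) a u := by
                refine ⟨(Q.takeUntil a haQ).reverse, fun y hy => ?_⟩
                rw [Walk.support_reverse, List.mem_reverse] at hy
                have hyP : y ∈ P.support :=
                  P.support_takeUntil_subset hxP (Q.support_takeUntil_subset haQ hy)
                exact ⟨Or.inr hyP, fun hh => hxQ (by rwa [Set.mem_singleton_iff.mp hh] at hy)⟩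
              have huSx : u ∈ S \ {x} := by
                obtain ⟨wk, hwk⟩ := hwalk
                exact hwk u wk.end_mem_support
              exact hwalk.trans (walkIn_of_adj hu.symm huSx hvS')
            · -- suffix side: go to w
              set R := (P.dropUntil x hxP).reverse with hR
              have hRpath : R.IsPath := (hP.dropUntil hxP).reverse
              have haR' : a ∈ R.support := by
                rw [hR, Walk.support_reverse, List.mem_reverse]; exact haR
              have hxR : x ∉ (R.takeUntil a haR').support :=
                not_end_mem_takeUntil hRpath haR' hax
              have hwalk : WalkIn G (S \ {x}) a w := by
                refine ⟨(R.takeUntil a haR').reverse, fun y hy => ?_⟩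
                rw [Walk.support_reverse, List.mem_reverse] at hy
                have hyR : y ∈ R.support := R.support_takeUntil_subset haR' hy
                have hyP : y ∈ P.support := by
                  rw [hR, Walk.support_reverse, List.mem_reverse] at hyR
                  exact P.support_dropUntil_subset hxP hyR
                exact ⟨Or.inr hyP, fun hh => hxR (by rwa [Set.mem_singleton_iff.mp hh] at hy)⟩
              have hwSx : w ∈ S \ {x} := by
                obtain ⟨wk, hwk⟩ := hwalk
                exact hwk w wk.end_mem_support
              exact hwalk.trans (walkIn_of_adj hw.symm hwSx hvS')
        exact connected_induce_of ⟨v, hvS'⟩ fun a ha b hb =>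
          (key a ha).trans (key b hb).symm
  exact clique_of_biconn hbg hbic huS hwS huw


/-- From a connected set of size ≥ 2 one can peel off a vertex `v` (a farthest
vertex from some root) so that the rest remains connected and `v` has a
neighbour in the rest. -/
lemma exists_peel [Fintype V] [DecidableEq V] {s : Finset V}
    (hconn : ∀ a ∈ s, ∀ b ∈ s, WalkIn G (↑s) a b) (hcard : 2 ≤ s.card) :
    ∃ v ∈ s, (∃ y ∈ s.erase v, G.Adj v y) ∧
      ∀ a ∈ s.erase v, ∀ b ∈ s.erase v, WalkIn G (↑(s.erase v)) a b := by
  classical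
  have hne : s.Nonempty := Finset.card_pos.mp (by omega)
  obtain ⟨x0, hx0⟩ := hne
  set H : SimpleGraph (↑s : Set V) := SimpleGraph.induce (↑s) G with hH
  have hHconn : H.Connected :=
    connected_induce_of ⟨x0, hx0⟩ (by exact_mod_cast hconn)
  set x0' : (↑s : Set V) := ⟨x0, hx0⟩ with hx0'
  obtain ⟨v', _, hv'max⟩ :=
    Finset.exists_max_image (Finset.univ : Finset (↑s : Set V)) (fun y => H.dist x0' y)
      ⟨x0', Finset.mem_univ _⟩
  set v : V := ↑v' with hv
  have hvs : v ∈ s := v'.2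
  -- v ≠ x0
  have hvx0 : v' ≠ x0' := by
    obtain ⟨y, hy, hyx0⟩ := Finset.exists_mem_ne (show 1 < s.card by omega) x0
    intro hEq
    have h2 : H.dist x0' ⟨y, hy⟩ = 0 := by
      have h2' := hv'max ⟨y, hy⟩ (Finset.mem_univ _)
      rw [hEq, SimpleGraph.dist_self] at h2'
      omega
    have h3 := (hHconn.dist_eq_zero_iff).mp h2
    exact hyx0 (congrArg Subtype.val h3).symm
  -- every other vertex reaches x0 avoiding v
  have havoid : ∀ x' : (↑s : Set V), x' ≠ v' → ∃ wH : H.Walk x0' x', v' ∉ wH.support := by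
    intro x' hx'
    obtain ⟨wH, hwHlen⟩ := (hHconn x0' x').exists_walk_length_eq_dist
    refine ⟨wH, fun hmem => ?_⟩
    have h1 : H.dist x0' v' ≤ (wH.takeUntil v' hmem).length := SimpleGraph.dist_le _
    have h2 : (wH.takeUntil v' hmem).length + (wH.dropUntil v' hmem).length = wH.length := by
      rw [← Walk.length_append, Walk.take_spec]
    have h3 : H.dist x0' x' ≤ H.dist x0' v' := hv'max x' (Finset.mem_univ _)
    have h4 : (wH.dropUntil v' hmem).length = 0 := by omega
    exact hx' (Walk.eq_of_length_eq_zero h4).symm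
  have hreach : ∀ x ∈ s.erase v, WalkIn G (↑(s.erase v)) x0 x := by
    intro x hx
    have hxs : x ∈ s := Finset.mem_of_mem_erase hx
    have hxv : x ≠ v := Finset.ne_of_mem_erase hx
    obtain ⟨wH, hwH⟩ := havoid ⟨x, hxs⟩ (fun hh => hxv (congrArg Subtype.val hh))
    refine ⟨wH.map (SimpleGraph.Embedding.induce (↑s : Set V)).toHom, fun y hy => ?_⟩
    replace hy : y ∈ wH.support.map (SimpleGraph.Embedding.induce (G := G) (↑s : Set V)).toHom := by
      rw [← Walk.support_map]; exact hy
    rw [List.mem_map] at hy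
    obtain ⟨y', hy', rfl⟩ := hy
    rw [Finset.coe_erase]
    refine ⟨y'.2, fun hh => hwH ?_⟩
    have : y' = v' := Subtype.ext (Set.mem_singleton_iff.mp hh)
    rwa [← this]
  -- x0 stays
  have hx0er : x0 ∈ s.erase v := by
    refine Finset.mem_erase.mpr ⟨fun hh => hvx0 ?_, hx0⟩
    exact Subtype.ext hh.symm
  refine ⟨v, hvs, ?_, ?_⟩
  · -- v has a neighbour in the rest
    obtain ⟨w0, hw0⟩ := hconn v hvs x0 hx0
    have hvx0' : v ≠ x0 := fun hh => hvx0 (Subtype.ext hh)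
    set P := w0.bypass with hPdef
    have hP : P.IsPath := w0.bypass_isPath
    have hnil : ¬P.Nil := Walk.not_nil_of_ne hvx0'
    set b := P.getVert 1 with hb
    have hadj : G.Adj v b := Walk.adj_snd hnil
    have hbtail : b ∈ P.support.tail := by
      rw [← Walk.support_tail_of_not_nil P hnil]
      exact Walk.start_mem_support _
    have hbs : b ∈ s := by
      apply hw0; apply w0.support_bypass_subset
      rcases P.support_eq_cons ▸ hbtail with h
      rw [P.support_eq_cons]
      exact List.mem_cons_of_mem _ hbtail
    have hbv : b ≠ v := by
      intro hh
      have hnd := hP.support_nodup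
      rw [P.support_eq_cons] at hnd
      have hvnot : v ∉ P.support.tail := (List.nodup_cons.mp hnd).1
      rw [hh] at hbtail
      exact hvnot hbtail
    exact ⟨b, Finset.mem_erase.mpr ⟨hbv, hbs⟩, hadj⟩
  · intro a ha b hb
    exact ((hreach a ha).symm).trans (hreach b hb)


/-- `M` is a maximal clique within the vertex set `s`. -/
def MaxCl (G : SimpleGraph V) (s : Finset V) (M : Set V) : Prop :=
  M ⊆ (↑s : Set V) ∧ G.IsClique M ∧ ∀ w ∈ s, w ∉ M → ∃ u ∈ M, ¬ G.Adj w u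

section Peel
variable [Fintype V] [DecidableEq V]
variable (hbg : ∀ S : Set V, IsBlockSet G S → G.IsClique S)
variable {s : Finset V} {v : V} (hvs : v ∈ s)
variable (hconn' : ∀ a ∈ s.erase v, ∀ b ∈ s.erase v, WalkIn G (↑(s.erase v)) a b)

/-- the neighbourhood of the peeled vertex -/
def nbr (G : SimpleGraph V) (s : Finset V) (v : V) [DecidableEq V] : Set V :=
  {u | u ∈ s.erase v ∧ G.Adj v u}

lemma nbr_subset : nbr G s v ⊆ (↑(s.erase v) : Set V) := fun u hu => hu.1

lemma not_v_mem_nbr : v ∉ nbr G s v := fun h => (Finset.ne_of_mem_erase h.1) rfl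

include hbg hconn' in
lemma nbr_clique : G.IsClique (nbr G s v) := by
  rw [isClique_iff]
  intro a ha b hb hab
  refine adj_of_detour hbg ha.2 hb.2 hab ?_
  refine (hconn' a ha.1 b hb.1).mono ?_
  intro x hx
  simp only [Finset.coe_erase, Set.mem_diff, Set.mem_singleton_iff] at hx
  exact hx.2

include hbg hconn' in
lemma nbr_insert_clique : G.IsClique (insert v (nbr G s v)) := by
  rw [isClique_iff]
  intro a ha b hb hab
  rcases ha with rfl | ha
  · rcases hb with rfl | hb
    · exact absurd rfl hab
    · exact hb.2
  · rcases hb with rfl | hb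
    · exact ha.2.symm
    · exact (nbr_clique hbg hconn') ha hb hab

include hbg hconn' in
/-- a maximal clique of `s` containing `v` must be `{v} ∪ N(v)`. -/
lemma maxCl_of_mem (M : Set V) (hM : MaxCl G s M) (hvM : v ∈ M) :
    M = insert v (nbr G s v) := by
  obtain ⟨hMs, hMcl, hMmax⟩ := hM
  apply Set.Subset.antisymm
  · intro u hu
    rcases eq_or_ne u v with rfl | huv
    · exact Set.mem_insert _ _
    · refine Set.mem_insert_of_mem _ ⟨Finset.mem_erase.mpr ⟨huv, hMs hu⟩, ?_⟩
      exact hMcl hvM hu (Ne.symm huv)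
  · intro w hw
    by_contra hwM
    rcases hw with rfl | hw
    · exact hwM hvM
    · obtain ⟨u, huM, hnadj⟩ := hMmax w (Finset.mem_of_mem_erase hw.1) hwM
      rcases eq_or_ne u v with rfl | huv
      · exact hnadj hw.2.symm
      · have huC : u ∈ nbr G s v := by
          refine ⟨Finset.mem_erase.mpr ⟨huv, hMs huM⟩, hMcl hvM huM (Ne.symm huv)⟩
        rcases eq_or_ne w u with rfl | hwu
        · exact hwM huM
        · exact hnadj ((nbr_clique hbg hconn') hw huC hwu)

include hvs in
/-- a maximal clique of `s` not containing `v` is a maximal clique of `s.erase v`,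
and differs from `N(v)`. -/
lemma maxCl_of_not_mem (M : Set V) (hM : MaxCl G s M) (hvM : v ∉ M) :
    MaxCl G (s.erase v) M ∧ M ≠ nbr G s v := by
  obtain ⟨hMs, hMcl, hMmax⟩ := hM
  constructor
  · refine ⟨?_, hMcl, ?_⟩
    · intro u hu
      simp only [Finset.coe_erase, Set.mem_diff, Set.mem_singleton_iff]
      exact ⟨hMs hu, fun hh => hvM (hh ▸ hu)⟩
    · intro w hw hwM
      exact hMmax w (Finset.mem_of_mem_erase hw) hwM
  · intro hEq
    obtain ⟨u, huM, hnadj⟩ := hMmax v hvs hvM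
    rw [hEq] at huM
    exact hnadj huM.2

include hbg hconn' hvs in
/-- If `N(v)` has two elements then it is a maximal clique of `s.erase v`. -/
lemma nbr_maxCl {u0 w0 : V} (hu0 : u0 ∈ nbr G s v) (hw0 : w0 ∈ nbr G s v)
    (hu0w0 : u0 ≠ w0) : MaxCl G (s.erase v) (nbr G s v) := by
  refine ⟨nbr_subset, nbr_clique hbg hconn', ?_⟩
  intro w hw hwC
  by_contra hcon
  push_neg at hcon
  -- w is adjacent to everything in nbr G s v
  have hadjall : ∀ u ∈ nbr G s v, G.Adj w u := by
    intro u hu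
    rcases eq_or_ne w u with rfl | hwu
    · exact absurd hu hwC
    · exact hcon u hu
  have hwv : w ≠ v := Finset.ne_of_mem_erase hw
  have hnadjvw : ¬ G.Adj v w := fun hh => hwC ⟨hw, hh⟩
  -- T = C ∪ {v, w} is biconnected, hence a clique, contradiction
  set C := nbr G s v with hC
  set T : Set V := insert v (insert w C) with hT
  have hCclique := nbr_clique hbg hconn' (s := s) (v := v)
  have hvT : v ∈ T := Set.mem_insert _ _
  have hwT : w ∈ T := Set.mem_insert_of_mem _ (Set.mem_insert _ _)
  have hCsubT : C ⊆ T := fun x hx => Set.mem_insert_of_mem _ (Set.mem_insert_of_mem _ hx)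
  -- hub lemma: everything in T \ {x} is joined to any u1 ∈ C \ {x}
  have hub : ∀ u1 ∈ C, ∀ x : V, x ≠ u1 → ∀ a ∈ T \ {x}, WalkIn G (T \ {x}) a u1 := by
    intro u1 hu1 x hxu1 a ha
    have hu1T : u1 ∈ T \ {x} := ⟨hCsubT hu1, fun hh => hxu1 (Set.mem_singleton_iff.mp hh).symm⟩
    obtain ⟨haT, hax⟩ := ha
    rcases haT with rfl | haT
    · exact walkIn_of_adj hu1.2 ⟨hvT, hax⟩ hu1T
    · rcases haT with rfl | haC
      · exact walkIn_of_adj (hadjall u1 hu1) ⟨hwT, hax⟩ hu1T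
      · rcases eq_or_ne a u1 with rfl | hau1
        · exact walkIn_refl hu1T
        · exact walkIn_of_adj (hCclique haC hu1 hau1) ⟨hCsubT haC, hax⟩ hu1T
  have hubT : ∀ u1 ∈ C, ∀ a ∈ T, WalkIn G T a u1 := by
    intro u1 hu1 a ha
    have hu1T : u1 ∈ T := hCsubT hu1
    rcases ha with rfl | ha
    · exact walkIn_of_adj hu1.2 hvT hu1T
    · rcases ha with rfl | haC
      · exact walkIn_of_adj (hadjall u1 hu1) hwT hu1T
      · rcases eq_or_ne a u1 with rfl | hau1
        · exact walkIn_refl hu1T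
        · exact walkIn_of_adj (hCclique haC hu1 hau1) (hCsubT haC) hu1T
  have hvu0 : v ≠ u0 := fun hh => not_v_mem_nbr (G := G) (s := s) (hh ▸ hu0)
  have hbic : IsBiconnSet G T := by
    constructor
    · refine connected_induce_of ⟨v, hvT⟩ fun a ha b hb => ?_
      exact (hubT u0 hu0 a ha).trans (hubT u0 hu0 b hb).symm
    · intro x hxT
      by_cases hxu0 : x = u0
      · subst hxu0
        refine connected_induce_of ⟨v, hvT, fun hh => hvu0 (Set.mem_singleton_iff.mp hh)⟩
          fun a ha b hb => ?_
        exact (hub w0 hw0 x hu0w0 a ha).trans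
          (hub w0 hw0 x hu0w0 b hb).symm
      · refine connected_induce_of
          ⟨u0, hCsubT hu0, fun hh => hxu0 (Set.mem_singleton_iff.mp hh).symm⟩
          fun a ha b hb => ?_
        exact (hub u0 hu0 x hxu0 a ha).trans
          (hub u0 hu0 x hxu0 b hb).symm
  have hcl := clique_of_biconn hbg hbic
  exact hnadjvw (hcl hvT hwT (Ne.symm hwv))

end Peel

/-- A virtual vertex position `qρ.1` with radius `qρ.2` whose mutual-containment
pattern on `s` is exactly the set `M`. -/
def Slot (G : SimpleGraph V) (s : Finset V) (p r : V → ℝ) (M : Set V) (qρ : ℝ × ℝ) : Prop :=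
  0 < qρ.2 ∧ (∀ u ∈ M, |qρ.1 - p u| < min qρ.2 (r u) ∧ qρ.1 ≠ p u) ∧
    ∀ w ∈ s, w ∉ M → min qρ.2 (r w) < |qρ.1 - p w|

/-- A good realization of `G` on the vertex set `s`. -/
def Good (G : SimpleGraph V) (s : Finset V) (p r : V → ℝ) (σ : Set V → ℝ × ℝ) : Prop :=
  (∀ v ∈ s, 0 < r v) ∧
  (∀ u ∈ s, ∀ w ∈ s, u ≠ w → (G.Adj u w ↔ |p u - p w| ≤ min (r u) (r w))) ∧
  (∀ u ∈ s, ∀ w ∈ s, p u = p w → u = w) ∧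
  (∀ M : Set V, MaxCl G s M → Slot G s p r M (σ M)) ∧
  (∀ M N : Set V, MaxCl G s M → MaxCl G s N → M ≠ N →
      min (σ M).2 (σ N).2 < |(σ M).1 - (σ N).1|)

lemma exists_pos_le_on {ι : Type*} {A : Set ι} (hA : A.Finite) (f : ι → ℝ)
    (hf : ∀ i ∈ A, 0 < f i) : ∃ δ : ℝ, 0 < δ ∧ ∀ i ∈ A, δ ≤ f i := by
  classical
  rcases hA.toFinset.eq_empty_or_nonempty with he | hne
  · refine ⟨1, one_pos, fun i hi => absurd (hA.mem_toFinset.mpr hi) (by simp [he])⟩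
  · refine ⟨min 1 (hA.toFinset.inf' hne f), lt_min one_pos ?_, fun i hi => ?_⟩
    · rw [Finset.lt_inf'_iff]
      intro i hi; exact hf i (hA.mem_toFinset.mp hi)
    · exact le_trans (min_le_right _ _) (Finset.inf'_le f (hA.mem_toFinset.mpr hi))

lemma exists_param {t0 : ℝ} (ht0 : 0 < t0) (B : Set ℝ) (hB : B.Finite) :
    ∃ t : ℝ, 0 < t ∧ t < t0 ∧ t ∉ B := by
  have hioo : (Set.Ioo (0:ℝ) t0).Infinite := Set.Ioo_infinite ht0
  obtain ⟨t, ht⟩ := (hioo.diff hB).nonempty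
  exact ⟨t, ht.1.1, ht.1.2, ht.2⟩


lemma exists_good [Fintype V] [DecidableEq V]
    (hbg : ∀ S : Set V, IsBlockSet G S → G.IsClique S) :
    ∀ (n : ℕ) (s : Finset V), s.card = n → s.Nonempty →
      (∀ a ∈ s, ∀ b ∈ s, WalkIn G (↑s) a b) →
      ∃ (p r : V → ℝ) (σ : Set V → ℝ × ℝ), Good G s p r σ := by
  intro n
  induction n using Nat.strong_induction_on with
  | _ n IH =>
    intro s hcard hne hconn
    rcases le_or_gt s.card 1 with hle | hlt
    · -- base case : a single vertex
      have hcard1 : s.card = 1 := le_antisymm hle (Finset.card_pos.mpr hne)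
      obtain ⟨v0, rfl⟩ := Finset.card_eq_one.mp hcard1
      have key : ∀ M : Set V, MaxCl G {v0} M → M = {v0} := by
        intro M hM
        have hv0M : v0 ∈ M := by
          by_contra hv0M
          obtain ⟨u, huM, _⟩ := hM.2.2 v0 (Finset.mem_singleton_self v0) hv0M
          have := hM.1 huM
          rw [Finset.coe_singleton, Set.mem_singleton_iff] at this
          exact hv0M (this ▸ huM)
        apply Set.Subset.antisymm (by exact_mod_cast hM.1)
        intro x hx
        rw [Set.mem_singleton_iff] at hx
        rw [hx]
        exact hv0M
      refine ⟨fun _ => 0, fun _ => 1, fun _ => (1/2, 3/4), ?_, ?_, ?_, ?_, ?_⟩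
      · intro v _; norm_num
      · intro u hu w hw huw
        rw [Finset.mem_singleton] at hu hw
        exact absurd (hu.trans hw.symm) huw
      · intro u hu w hw _
        rw [Finset.mem_singleton] at hu hw
        rw [hu, hw]
      · intro M hM
        have hMv0 := key M hM
        refine ⟨by norm_num, ?_, ?_⟩
        · intro u huM
          have : u = v0 := by rw [hMv0] at huM; exact huM
          subst this
          constructor
          · rw [show |(1:ℝ)/2 - 0| = 1/2 by norm_num]
            norm_num
          · norm_num
        · intro w hw hwM
          rw [Finset.mem_singleton] at hw
          rw [hMv0] at hwM
          exact absurd (by rw [hw]; exact rfl) hwM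
      · intro M N hM hN hMN
        exact absurd ((key M hM).trans (key N hN).symm) hMN
    · -- inductive step
      obtain ⟨v, hvs, ⟨y, hy, hvy⟩, hconn'⟩ := exists_peel hconn hlt
      set s' : Finset V := s.erase v with hs'
      have hcard' : s'.card = n - 1 := by
        rw [hs', Finset.card_erase_of_mem hvs, hcard]
      have hlt' : n - 1 < n := by omega
      obtain ⟨p, r, σ, hpos, hadj, hinj, hslot, hsep⟩ :=
        IH (n-1) hlt' s' hcard' ⟨y, hy⟩ hconn'
      set C : Set V := nbr G s v with hC
      have hyC : y ∈ C := ⟨hy, hvy⟩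
      have hCs' : C ⊆ (↑s' : Set V) := fun u hu => hu.1
      have hvC : v ∉ C := fun hc => (Finset.ne_of_mem_erase hc.1) rfl
      have hsub : ∀ x ∈ s, x ≠ v → x ∈ s' := fun x hx hxv => Finset.mem_erase.mpr ⟨hxv, hx⟩
      have hvns' : v ∉ s' := fun hc => (Finset.ne_of_mem_erase hc) rfl
      by_cases h2 : ∃ u0 ∈ C, ∃ w0 ∈ C, u0 ≠ w0
      · -- CASE A : the neighbourhood C has ≥ 2 elements
        obtain ⟨u0, hu0, w0, hw0, hu0w0⟩ := h2
        have hCmax : MaxCl G s' C := nbr_maxCl hbg hvs hconn' hu0 hw0 hu0w0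
        obtain ⟨hρpos, hslotCmem, hslotCout⟩ := hslot C hCmax
        set q : ℝ := (σ C).1 with hq
        set ρ : ℝ := (σ C).2 with hρ
        -- the radius of the cluster C around q
        have hCfin : C.Finite := Set.toFinite _
        have hCfne : hCfin.toFinset.Nonempty := ⟨u0, hCfin.mem_toFinset.mpr hu0⟩
        set m : ℝ := hCfin.toFinset.sup' hCfne (fun u => |q - p u|) with hm
        have hmle : ∀ u ∈ C, |q - p u| ≤ m :=
          fun u hu => Finset.le_sup' (fun u => |q - p u|) (hCfin.mem_toFinset.mpr hu)
        have hm0 : 0 ≤ m := le_trans (abs_nonneg _) (hmle u0 hu0)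
        have hmρ : m < ρ := by
          rw [hm, Finset.sup'_lt_iff]
          intro u hu
          exact lt_of_lt_of_le (hslotCmem u (hCfin.mem_toFinset.mp hu)).1 (min_le_left _ _)
        -- margins
        obtain ⟨δ1, hδ1pos, hδ1⟩ := exists_pos_le_on hCfin (fun u => r u - |q - p u|)
          (fun u hu => by have := (hslotCmem u hu).1; have := min_le_right ρ (r u); linarith)
        obtain ⟨δ2, hδ2pos, hδ2⟩ := exists_pos_le_on (Set.toFinite {w | w ∈ s' ∧ w ∉ C})
          (fun w => |q - p w| - min ρ (r w))
          (fun w hw => by have := hslotCout w hw.1 hw.2; linarith)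
        obtain ⟨δ3, hδ3pos, hδ3⟩ := exists_pos_le_on
          (Set.toFinite {M : Set V | MaxCl G s' M ∧ M ≠ C})
          (fun M => |(σ M).1 - q| - min (σ M).2 ρ)
          (fun M hM => by have := hsep M C hM.1 hCmax hM.2; linarith)
        obtain ⟨t, htpos, htlt, htB⟩ := exists_param
          (show (0:ℝ) < min δ1 (min δ2 (min δ3 ((ρ - m)/2))) by
            refine lt_min hδ1pos (lt_min hδ2pos (lt_min hδ3pos (by linarith))))
          ((fun z => z - q) '' (insert q (p '' (↑s' : Set V))))
          (((Set.toFinite _).insert q).image _)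
        have ht1 : t < δ1 := lt_of_lt_of_le htlt (min_le_left _ _)
        have ht2 : t < δ2 := lt_of_lt_of_le htlt ((min_le_right _ _).trans (min_le_left _ _))
        have ht3 : t < δ3 := lt_of_lt_of_le htlt
          ((min_le_right _ _).trans ((min_le_right _ _).trans (min_le_left _ _)))
        have ht4 : t < (ρ - m)/2 := lt_of_lt_of_le htlt
          ((min_le_right _ _).trans ((min_le_right _ _).trans (min_le_right _ _)))
        have hqt_ne : ∀ w ∈ s', q + t ≠ p w := by
          intro w hw hEq
          exact htB ⟨p w, Set.mem_insert_of_mem _ ⟨w, hw, rfl⟩, by rw [← hEq]; ring⟩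
        have hqt_ne_q : q + t ≠ q := by intro hEq; linarith [congrArg (· - q) hEq]
        set ρ' : ℝ := m + 2*t with hρ'
        have hρ'pos : 0 < ρ' := by rw [hρ']; linarith
        have hρ'ρ : ρ' < ρ := by rw [hρ']; linarith
        -- q is distinct from all points of s'
        have hqp : ∀ w ∈ s', q ≠ p w := by
          intro w hw
          by_cases hwC : w ∈ C
          · exact (hslotCmem w hwC).2
          · have := hslotCout w hw hwC
            have hmin : 0 < min ρ (r w) := lt_min hρpos (hpos w hw)
            intro hEq
            rw [hEq, sub_self, abs_zero] at this
            linarith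
        classical
        refine ⟨Function.update p v q, Function.update r v ρ,
          Function.update σ (insert v C) (q + t, ρ'), ?_, ?_, ?_, ?_, ?_⟩
        · -- positivity of radii
          intro x hx
          by_cases hxv : x = v
          · rw [hxv, Function.update_self]; exact hρpos
          · rw [Function.update_of_ne hxv]; exact hpos x (hsub x hx hxv)
        · -- adjacency characterization
          have main : ∀ b ∈ s', (G.Adj v b ↔ |q - p b| ≤ min ρ (r b)) := by
            intro b hb
            constructor
            · intro hAdj
              exact le_of_lt (hslotCmem b ⟨hb, hAdj⟩).1
            · intro hle
              by_cases hbC : b ∈ C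
              · exact hbC.2
              · exact absurd hle (not_le.mpr (hslotCout b hb hbC))
          intro a ha b hb hab
          by_cases hav : a = v
          · have hbv : b ≠ v := fun hh => hab (hav.trans hh.symm)
            have hbs' : b ∈ s' := hsub b hb hbv
            rw [hav, Function.update_self, Function.update_self,
              Function.update_of_ne hbv, Function.update_of_ne hbv]
            exact main b hbs'
          · by_cases hbv : b = v
            · have has' : a ∈ s' := hsub a ha hav
              rw [hbv, Function.update_self, Function.update_self,
                Function.update_of_ne hav, Function.update_of_ne hav]
              rw [adj_comm, abs_sub_comm, min_comm]
              exact main a has'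
            · rw [Function.update_of_ne hav, Function.update_of_ne hbv,
                Function.update_of_ne hav, Function.update_of_ne hbv]
              exact hadj a (hsub a ha hav) b (hsub b hb hbv) hab
        · -- injectivity of points
          intro a ha b hb hEq
          by_cases hav : a = v
          · by_cases hbv : b = v
            · exact hav.trans hbv.symm
            · rw [hav, Function.update_self, Function.update_of_ne hbv] at hEq
              exact absurd hEq (hqp b (hsub b hb hbv))
          · by_cases hbv : b = v
            · rw [hbv, Function.update_self, Function.update_of_ne hav] at hEq
              exact absurd hEq.symm (hqp a (hsub a ha hav))
            · rw [Function.update_of_ne hav, Function.update_of_ne hbv] at hEq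
              exact hinj a (hsub a ha hav) b (hsub b hb hbv) hEq
        · -- slots
          intro M hM
          by_cases hvM : v ∈ M
          · have hMeq : M = insert v C := maxCl_of_mem hbg hconn' M hM hvM
            rw [hMeq, Function.update_self]
            refine ⟨hρ'pos, ?_, ?_⟩
            · intro u hu
              rcases hu with rfl | huC
              · rw [Function.update_self, Function.update_self]
                constructor
                · rw [show q + t - q = t by ring, abs_of_pos htpos]
                  exact lt_min (by rw [hρ']; linarith) (by linarith)
                · exact hqt_ne_q
              · have huv : u ≠ v := fun hh => hvC (hh ▸ huC)
                have hus' : u ∈ s' := hCs' huC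
                rw [Function.update_of_ne huv, Function.update_of_ne huv]
                have hd : |q + t - p u| ≤ |q - p u| + t := by
                  have := abs_add_le (q - p u) t
                  have he : q + t - p u = (q - p u) + t := by ring
                  rw [he]
                  calc |(q - p u) + t| ≤ |q - p u| + |t| := abs_add_le _ _
                    _ = |q - p u| + t := by rw [abs_of_pos htpos]
                constructor
                · refine lt_min ?_ ?_
                  · have := hmle u huC; rw [hρ']; linarith
                  · have := hδ1 u huC; linarith
                · exact hqt_ne u hus'
            · intro w hw hwM
              have hwv : w ≠ v := fun hh => hwM (hh ▸ Set.mem_insert v C)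
              have hws' : w ∈ s' := hsub w hw hwv
              have hwC : w ∉ C := fun hh => hwM (Set.mem_insert_of_mem _ hh)
              rw [Function.update_of_ne hwv, Function.update_of_ne hwv]
              have hb2 := hδ2 w ⟨hws', hwC⟩
              have htri : |q - p w| ≤ |q + t - p w| + t := by
                have he : q - p w = (q + t - p w) - t := by ring
                rw [he]
                calc |(q + t - p w) - t| ≤ |q + t - p w| + |t| := abs_sub _ _
                  _ = |q + t - p w| + t := by rw [abs_of_pos htpos]
              have hmono : min ρ' (r w) ≤ min ρ (r w) :=
                min_le_min (le_of_lt hρ'ρ) le_rfl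
              linarith
          · obtain ⟨hM', hMC⟩ := maxCl_of_not_mem hvs M hM hvM
            have hkey : M ≠ insert v C := fun hEq => hvM (hEq ▸ Set.mem_insert v C)
            rw [Function.update_of_ne hkey]
            obtain ⟨h1, h2, h3⟩ := hslot M hM'
            refine ⟨h1, ?_, ?_⟩
            · intro u hu
              have hus' : u ∈ s' := hM'.1 hu
              have huv : u ≠ v := fun hh => hvns' (hh ▸ hus')
              rw [Function.update_of_ne huv, Function.update_of_ne huv]
              exact h2 u hu
            · intro w hw hwM
              by_cases hwv : w = v
              · subst hwv
                rw [Function.update_self, Function.update_self]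
                have := hsep M C hM' hCmax hMC
                rw [← hq, ← hρ] at this
                exact this
              · rw [Function.update_of_ne hwv, Function.update_of_ne hwv]
                exact h3 w (hsub w hw hwv) hwM
        · -- separation of slots
          intro M N hM hN hMN
          have habs : ∀ z : ℝ, |z - q| ≤ |z - (q + t)| + t := by
            intro z
            have he : z - q = (z - (q + t)) + t := by ring
            rw [he]
            calc |(z - (q + t)) + t| ≤ |z - (q + t)| + |t| := abs_add_le _ _
              _ = |z - (q + t)| + t := by rw [abs_of_pos htpos]
          by_cases hvM : v ∈ M
          · have hMeq : M = insert v C := maxCl_of_mem hbg hconn' M hM hvM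
            by_cases hvN : v ∈ N
            · exact absurd (hMeq.trans (maxCl_of_mem hbg hconn' N hN hvN).symm) hMN
            · obtain ⟨hN', hNC⟩ := maxCl_of_not_mem hvs N hN hvN
              have hkeyN : N ≠ insert v C := fun hEq => hvN (hEq ▸ Set.mem_insert v C)
              rw [hMeq, Function.update_self, Function.update_of_ne hkeyN]
              have hb3 := hδ3 N ⟨hN', hNC⟩
              have h5 := habs (σ N).1
              have hmono : min ρ' (σ N).2 ≤ min ρ (σ N).2 :=
                min_le_min (le_of_lt hρ'ρ) le_rfl
              have hcomm : min (σ N).2 ρ = min ρ (σ N).2 := min_comm _ _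
              have hgoal : min ρ' (σ N).2 < |(σ N).1 - (q + t)| := by linarith
              calc min (q + t, ρ').2 (σ N).2 = min ρ' (σ N).2 := rfl
                _ < |(σ N).1 - (q + t)| := hgoal
                _ = |(q + t, ρ').1 - (σ N).1| := by rw [abs_sub_comm]
          · by_cases hvN : v ∈ N
            · have hNeq : N = insert v C := maxCl_of_mem hbg hconn' N hN hvN
              obtain ⟨hM', hMC⟩ := maxCl_of_not_mem hvs M hM hvM
              have hkeyM : M ≠ insert v C := fun hEq => hvM (hEq ▸ Set.mem_insert v C)
              rw [hNeq, Function.update_self, Function.update_of_ne hkeyM]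
              have hb3 := hδ3 M ⟨hM', hMC⟩
              have h5 := habs (σ M).1
              have hmono : min (σ M).2 ρ' ≤ min (σ M).2 ρ := min_le_min le_rfl (le_of_lt hρ'ρ)
              have hgoal : min (σ M).2 ρ' < |(σ M).1 - (q + t)| := by linarith
              exact hgoal
            · obtain ⟨hM', _⟩ := maxCl_of_not_mem hvs M hM hvM
              obtain ⟨hN', _⟩ := maxCl_of_not_mem hvs N hN hvN
              have hkeyM : M ≠ insert v C := fun hEq => hvM (hEq ▸ Set.mem_insert v C)
              have hkeyN : N ≠ insert v C := fun hEq => hvN (hEq ▸ Set.mem_insert v C)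
              rw [Function.update_of_ne hkeyM, Function.update_of_ne hkeyN]
              exact hsep M N hM' hN' hMN
      · -- CASE B : C = {y}, pendant attachment
        push_neg at h2
        have hCy : ∀ u ∈ C, u = y := fun u hu => h2 u hu y hyC
        have hry : 0 < r y := hpos y hy
        obtain ⟨δ2, hδ2pos, hδ2⟩ := exists_pos_le_on (Set.toFinite {w | w ∈ s' ∧ w ≠ y})
          (fun w => |p y - p w|)
          (fun w hw => by
            rw [abs_pos, sub_ne_zero]
            intro hEq
            exact hw.2 (hinj y hy w hw.1 hEq).symm)
        obtain ⟨δ3, hδ3pos, hδ3⟩ := exists_pos_le_on (Set.toFinite {M : Set V | MaxCl G s' M})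
          (fun M => |(σ M).1 - p y|)
          (fun M hM => by
            rw [abs_pos, sub_ne_zero]
            obtain ⟨h1, h2', h3⟩ := hslot M hM
            by_cases hyM : y ∈ M
            · exact (h2' y hyM).2
            · have := h3 y hy hyM
              have hmin : 0 < min (σ M).2 (r y) := lt_min h1 hry
              intro hEq
              rw [hEq, sub_self, abs_zero] at this
              linarith)
        set η : ℝ := min (r y / 2) (min (δ2 / 5) (δ3 / 6)) with hη
        have hηpos : 0 < η := lt_min (by linarith) (lt_min (by linarith) (by linarith))
        have hη1 : η ≤ r y / 2 := min_le_left _ _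
        have hη2 : ∀ w ∈ s', w ≠ y → 5 * η ≤ |p y - p w| := by
          intro w hw hwy
          have h5 : η ≤ δ2 / 5 := (min_le_right _ _).trans (min_le_left _ _)
          have := hδ2 w ⟨hw, hwy⟩
          linarith
        have hη3 : ∀ M : Set V, MaxCl G s' M → 6 * η ≤ |(σ M).1 - p y| := by
          intro M hM
          have h6 : η ≤ δ3 / 6 := (min_le_right _ _).trans (min_le_right _ _)
          have := hδ3 M hM
          linarith
        have tri : ∀ d z w : ℝ, |z - w| ≤ |z + d - w| + |d| := by
          intro d z w
          have he : z - w = (z + d - w) - d := by ring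
          rw [he]
          exact abs_sub _ _
        -- q is distinct from all points of s'
        have hqp : ∀ w ∈ s', p y + η ≠ p w := by
          intro w hw hEq
          by_cases hwy : w = y
          · rw [hwy] at hEq; linarith
          · have h5 := hη2 w hw hwy
            have := tri η (p y) (p w)
            rw [hEq, sub_self, abs_zero, abs_of_pos hηpos] at this
            linarith
        classical
        refine ⟨Function.update p v (p y + η), Function.update r v η,
          Function.update σ (insert v C) (p y + 1.5*η, 2*η), ?_, ?_, ?_, ?_, ?_⟩
        · -- positivity of radii
          intro x hx
          by_cases hxv : x = v
          · rw [hxv, Function.update_self]; exact hηpos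
          · rw [Function.update_of_ne hxv]; exact hpos x (hsub x hx hxv)
        · -- adjacency characterization
          have main : ∀ b ∈ s', (G.Adj v b ↔ |p y + η - p b| ≤ min η (r b)) := by
            intro b hb
            constructor
            · intro hAdj
              have hbC : b ∈ C := ⟨hb, hAdj⟩
              have hby : b = y := hCy b hbC
              rw [hby]
              rw [show p y + η - p y = η by ring, abs_of_pos hηpos]
              exact le_min le_rfl (by linarith)
            · intro hle
              by_cases hby : b = y
              · rw [hby]; exact hvy
              · exfalso
                have h5 := hη2 b hb hby
                have htr := tri η (p y) (p b)
                rw [abs_of_pos hηpos] at htr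
                have hminle : min η (r b) ≤ η := min_le_left _ _
                linarith
          intro a ha b hb hab
          by_cases hav : a = v
          · have hbv : b ≠ v := fun hh => hab (hav.trans hh.symm)
            have hbs' : b ∈ s' := hsub b hb hbv
            rw [hav, Function.update_self, Function.update_self,
              Function.update_of_ne hbv, Function.update_of_ne hbv]
            exact main b hbs'
          · by_cases hbv : b = v
            · have has' : a ∈ s' := hsub a ha hav
              rw [hbv, Function.update_self, Function.update_self,
                Function.update_of_ne hav, Function.update_of_ne hav]
              rw [adj_comm, abs_sub_comm, min_comm]
              exact main a has'
            · rw [Function.update_of_ne hav, Function.update_of_ne hbv,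
                Function.update_of_ne hav, Function.update_of_ne hbv]
              exact hadj a (hsub a ha hav) b (hsub b hb hbv) hab
        · -- injectivity of points
          intro a ha b hb hEq
          by_cases hav : a = v
          · by_cases hbv : b = v
            · exact hav.trans hbv.symm
            · rw [hav, Function.update_self, Function.update_of_ne hbv] at hEq
              exact absurd hEq (hqp b (hsub b hb hbv))
          · by_cases hbv : b = v
            · rw [hbv, Function.update_self, Function.update_of_ne hav] at hEq
              exact absurd hEq.symm (hqp a (hsub a ha hav))
            · rw [Function.update_of_ne hav, Function.update_of_ne hbv] at hEq
              exact hinj a (hsub a ha hav) b (hsub b hb hbv) hEq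
        · -- slots
          intro M hM
          by_cases hvM : v ∈ M
          · have hMeq : M = insert v C := maxCl_of_mem hbg hconn' M hM hvM
            rw [hMeq, Function.update_self]
            refine ⟨by dsimp only; linarith, ?_, ?_⟩
            · intro u hu
              rcases hu with rfl | huC
              · rw [Function.update_self, Function.update_self]
                constructor
                · rw [show p y + 1.5*η - (p y + η) = 0.5*η by ring,
                    abs_of_pos (by linarith)]
                  exact lt_min (by linarith) (by linarith)
                · intro hEq
                  have : (0.5:ℝ)*η = 0 := by linarith [congrArg (· - (p y + η)) hEq]
                  linarith
              · have huy : u = y := hCy u huC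
                rw [huy]
                have hyv : y ≠ v := fun hh => hvns' (hh ▸ hy)
                rw [Function.update_of_ne hyv, Function.update_of_ne hyv]
                constructor
                · rw [show p y + 1.5*η - p y = 1.5*η by ring, abs_of_pos (by linarith)]
                  exact lt_min (by linarith) (by linarith)
                · intro hEq
                  have : (1.5:ℝ)*η = 0 := by linarith [congrArg (· - p y) hEq]
                  linarith
            · intro w hw hwM
              have hwv : w ≠ v := fun hh => hwM (hh ▸ Set.mem_insert v C)
              have hws' : w ∈ s' := hsub w hw hwv
              have hwy : w ≠ y := fun hh => hwM (Set.mem_insert_of_mem _ (hh ▸ hyC))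
              rw [Function.update_of_ne hwv, Function.update_of_ne hwv]
              have h5 := hη2 w hws' hwy
              have htr := tri (1.5*η) (p y) (p w)
              rw [abs_of_pos (by linarith : (0:ℝ) < 1.5*η)] at htr
              have hminle : min ((p y + 1.5*η, 2*η).2) (r w) ≤ 2*η := min_le_left _ _
              dsimp only at hminle ⊢
              linarith
          · obtain ⟨hM', hMC⟩ := maxCl_of_not_mem hvs M hM hvM
            have hkey : M ≠ insert v C := fun hEq => hvM (hEq ▸ Set.mem_insert v C)
            rw [Function.update_of_ne hkey]
            obtain ⟨h1, h2', h3⟩ := hslot M hM'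
            refine ⟨h1, ?_, ?_⟩
            · intro u hu
              have hus' : u ∈ s' := hM'.1 hu
              have huv : u ≠ v := fun hh => hvns' (hh ▸ hus')
              rw [Function.update_of_ne huv, Function.update_of_ne huv]
              exact h2' u hu
            · intro w hw hwM
              by_cases hwv : w = v
              · rw [hwv, Function.update_self, Function.update_self]
                have h6 := hη3 M hM'
                have htr := tri η (σ M).1 (p y)
                have htr2 : |(σ M).1 - (p y + η)| = |(σ M).1 - p y - η| := by ring_nf
                have habs2 : |(σ M).1 - p y| ≤ |(σ M).1 - (p y + η)| + η := by
                  have he : (σ M).1 - p y = ((σ M).1 - (p y + η)) + η := by ring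
                  rw [he]
                  calc |((σ M).1 - (p y + η)) + η| ≤ |(σ M).1 - (p y + η)| + |η| := abs_add_le _ _
                    _ = |(σ M).1 - (p y + η)| + η := by rw [abs_of_pos hηpos]
                have hminle : min (σ M).2 η ≤ η := min_le_right _ _
                linarith
              · rw [Function.update_of_ne hwv, Function.update_of_ne hwv]
                exact h3 w (hsub w hw hwv) hwM
        · -- separation of slots
          intro M N hM hN hMN
          have habs3 : ∀ z : ℝ, |z - p y| ≤ |z - (p y + 1.5*η)| + 1.5*η := by
            intro z
            have he : z - p y = (z - (p y + 1.5*η)) + 1.5*η := by ring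
            rw [he]
            calc |(z - (p y + 1.5*η)) + 1.5*η| ≤ |z - (p y + 1.5*η)| + |1.5*η| := abs_add_le _ _
              _ = |z - (p y + 1.5*η)| + 1.5*η := by rw [abs_of_pos (by linarith : (0:ℝ) < 1.5*η)]
          by_cases hvM : v ∈ M
          · have hMeq : M = insert v C := maxCl_of_mem hbg hconn' M hM hvM
            by_cases hvN : v ∈ N
            · exact absurd (hMeq.trans (maxCl_of_mem hbg hconn' N hN hvN).symm) hMN
            · obtain ⟨hN', _⟩ := maxCl_of_not_mem hvs N hN hvN
              have hkeyN : N ≠ insert v C := fun hEq => hvN (hEq ▸ Set.mem_insert v C)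
              rw [hMeq, Function.update_self, Function.update_of_ne hkeyN]
              have h6 := hη3 N hN'
              have h7 := habs3 (σ N).1
              have hminle : min ((p y + 1.5*η, 2*η).2) (σ N).2 ≤ 2*η := min_le_left _ _
              dsimp only at hminle ⊢
              rw [abs_sub_comm]
              linarith
          · by_cases hvN : v ∈ N
            · have hNeq : N = insert v C := maxCl_of_mem hbg hconn' N hN hvN
              obtain ⟨hM', _⟩ := maxCl_of_not_mem hvs M hM hvM
              have hkeyM : M ≠ insert v C := fun hEq => hvM (hEq ▸ Set.mem_insert v C)
              rw [hNeq, Function.update_self, Function.update_of_ne hkeyM]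
              have h6 := hη3 M hM'
              have h7 := habs3 (σ M).1
              have hminle : min (σ M).2 ((p y + 1.5*η, 2*η).2) ≤ 2*η := min_le_right _ _
              dsimp only at hminle ⊢
              linarith
            · obtain ⟨hM', _⟩ := maxCl_of_not_mem hvs M hM hvM
              obtain ⟨hN', _⟩ := maxCl_of_not_mem hvs N hN hvN
              have hkeyM : M ≠ insert v C := fun hEq => hvM (hEq ▸ Set.mem_insert v C)
              have hkeyN : N ≠ insert v C := fun hEq => hvN (hEq ▸ Set.mem_insert v C)
              rw [Function.update_of_ne hkeyM, Function.update_of_ne hkeyN]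
              exact hsep M N hM' hN' hMN


end CAND1Aux

/-- Every (connected) block graph — a graph in which every maximal biconnected
component induces a clique — belongs to `c-AND(1)`. -/
theorem blockGraph_mem_cand1 {V : Type*} [Fintype V] (G : SimpleGraph V)
    (hconn : G.Connected)
    (h : ∀ S : Set V, IsBlockSet G S → G.IsClique S) :
    InCAND1 G := by
  classical
  open CAND1Aux in
  have hne : (Finset.univ : Finset V).Nonempty := by
    obtain ⟨v⟩ := hconn.nonempty
    exact ⟨v, Finset.mem_univ v⟩
  have hwalk : ∀ a ∈ (Finset.univ : Finset V), ∀ b ∈ (Finset.univ : Finset V),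
      CAND1Aux.WalkIn G (↑(Finset.univ : Finset V)) a b := by
    intro a _ b _
    obtain ⟨w⟩ := hconn.preconnected a b
    exact ⟨w, fun x _ => by simp⟩
  obtain ⟨p, r, σ, hpos, hadj, hinj, -, -⟩ :=
    CAND1Aux.exists_good h (Finset.univ.card) Finset.univ rfl hne hwalk
  refine ⟨fun v => p v - r v, fun v => p v + r v, p, ⟨?_, ?_⟩, ?_⟩
  · intro v
    have := hpos v (Finset.mem_univ v)
    dsimp only
    constructor <;> linarith
  · intro u v huv
    dsimp only
    rw [hadj u (Finset.mem_univ u) v (Finset.mem_univ v) huv, le_min_iff,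
      abs_sub_le_iff, abs_sub_le_iff]
    constructor
    · rintro ⟨⟨h1, h2⟩, h3, h4⟩
      refine ⟨by linarith, by linarith, by linarith, by linarith⟩
    · rintro ⟨h1, h2, h3, h4⟩
      refine ⟨⟨by linarith, by linarith⟩, by linarith, by linarith⟩
  · intro v; ring
end

section
/- Given two cycles C_n and C'_m and edges uv ∈ E(C_n), u'v' ∈ E(C'_m), the graph obtained by identifying uv with u'v' (merging u with u' and v with v') belongs to c-AND(1). -/
/-- The graph obtained from the disjoint union of `G₁` and `G₂` by identifying
the edge `uv` of `G₁` with the edge `u'v'` of `G₂` (merging `u` with `u'` and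
`v` with `v'`). -/
def glueEdge {V₁ V₂ : Type*} (G₁ : SimpleGraph V₁) (G₂ : SimpleGraph V₂)
    (u v : V₁) (u' v' : V₂) :
    SimpleGraph (V₁ ⊕ {x : V₂ // x ≠ u' ∧ x ≠ v'}) where
  Adj a b := match a, b with
    | .inl a, .inl b => G₁.Adj a b
    | .inr a, .inr b => G₂.Adj a b
    | .inl a, .inr b => (a = u ∧ G₂.Adj u' b) ∨ (a = v ∧ G₂.Adj v' b)
    | .inr a, .inl b => (b = u ∧ G₂.Adj u' a) ∨ (b = v ∧ G₂.Adj v' a)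
  symm := by
    refine ⟨?_⟩
    rintro (a | a) (b | b) h <;> simp_all [SimpleGraph.adj_comm]
  loopless := by refine ⟨?_⟩; rintro (a | a) h <;> simp_all

/- ### Auxiliary lemmas -/

lemma glueEdge_adj_inl_inl {V₁ V₂ : Type*} (G₁ : SimpleGraph V₁) (G₂ : SimpleGraph V₂)
    (u v : V₁) (u' v' : V₂) (a b : V₁) :
    (glueEdge G₁ G₂ u v u' v').Adj (.inl a) (.inl b) ↔ G₁.Adj a b := Iff.rfl

lemma glueEdge_adj_inr_inr {V₁ V₂ : Type*} (G₁ : SimpleGraph V₁) (G₂ : SimpleGraph V₂)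
    (u v : V₁) (u' v' : V₂) (a b : {x : V₂ // x ≠ u' ∧ x ≠ v'}) :
    (glueEdge G₁ G₂ u v u' v').Adj (.inr a) (.inr b) ↔ G₂.Adj a.1 b.1 := Iff.rfl

lemma glueEdge_adj_inl_inr {V₁ V₂ : Type*} (G₁ : SimpleGraph V₁) (G₂ : SimpleGraph V₂)
    (u v : V₁) (u' v' : V₂) (a : V₁) (b : {x : V₂ // x ≠ u' ∧ x ≠ v'}) :
    (glueEdge G₁ G₂ u v u' v').Adj (.inl a) (.inr b) ↔
      (a = u ∧ G₂.Adj u' b.1) ∨ (a = v ∧ G₂.Adj v' b.1) := Iff.rfl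

lemma glueEdge_adj_inr_inl {V₁ V₂ : Type*} (G₁ : SimpleGraph V₁) (G₂ : SimpleGraph V₂)
    (u v : V₁) (u' v' : V₂) (a : V₁) (b : {x : V₂ // x ≠ u' ∧ x ≠ v'}) :
    (glueEdge G₁ G₂ u v u' v').Adj (.inr b) (.inl a) ↔
      (a = u ∧ G₂.Adj u' b.1) ∨ (a = v ∧ G₂.Adj v' b.1) := Iff.rfl

lemma fin_sub_val' {n : ℕ} (a b : Fin n) :
    (a - b).val = if b.val ≤ a.val then a.val - b.val else a.val + n - b.val := by
  have ha := a.isLt; have hb := b.isLt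
  rw [Fin.sub_def]
  simp only []
  split_ifs with h
  · have h2 : (n - b.val) + a.val = (a.val - b.val) + n := by omega
    rw [h2, Nat.add_mod_right]
    apply Nat.mod_eq_of_lt; omega
  · have h3 : n - b.val + a.val = a.val + n - b.val := by omega
    rw [h3]; apply Nat.mod_eq_of_lt; omega

lemma cyc_char_inner {n : ℕ} [NeZero n] (hn : 3 ≤ n) (h : Fin n → Fin n)
    (hinj : Function.Injective h)
    (hadj : ∀ w w' : Fin n, (SimpleGraph.cycleGraph n).Adj w w' ↔
      ((h w - h w').val = 1 ∨ (h w' - h w).val = 1))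
    (u v : Fin n) (hu0 : h u = 0) (hv : (h v).val = n - 1) :
    ∃ f : Fin n → ℕ, (∀ w, f w < n) ∧ Function.Injective f ∧ f u = 0 ∧ f v = n - 1 ∧
      ∀ w w', (SimpleGraph.cycleGraph n).Adj w w' ↔
        (f w + 1 = f w' ∨ f w' + 1 = f w ∨ (f w = 0 ∧ f w' = n - 1) ∨
          (f w' = 0 ∧ f w = n - 1)) := by
  refine ⟨fun w => (h w).val, fun w => (h w).isLt,
    fun w w' hw => hinj (Fin.val_injective hw), by simp [hu0], hv, ?_⟩
  intro w w'
  beta_reduce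
  rw [hadj w w', fin_sub_val', fin_sub_val']
  have h1 := (h w).isLt; have h2 := (h w').isLt
  split_ifs <;> omega

lemma cyc_char {n : ℕ} (hn : 3 ≤ n) {u v : Fin n}
    (huv : (SimpleGraph.cycleGraph n).Adj u v) :
    ∃ f : Fin n → ℕ, (∀ w, f w < n) ∧ Function.Injective f ∧ f u = 0 ∧ f v = n - 1 ∧
      ∀ w w', (SimpleGraph.cycleGraph n).Adj w w' ↔
        (f w + 1 = f w' ∨ f w' + 1 = f w ∨ (f w = 0 ∧ f w' = n - 1) ∨
          (f w' = 0 ∧ f w = n - 1)) := by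
  haveI : NeZero n := ⟨by omega⟩
  rw [SimpleGraph.cycleGraph_adj'] at huv
  have hvlt := v.isLt; have hult := u.isLt
  rcases huv with hc | hc
  · refine cyc_char_inner hn (fun w => w - u) sub_left_injective ?_ u v (by simp) ?_
    · intro w w'
      beta_reduce
      rw [sub_sub_sub_cancel_right w w' u, sub_sub_sub_cancel_right w' w u]
      exact SimpleGraph.cycleGraph_adj'
    · beta_reduce
      rw [fin_sub_val'] at hc ⊢
      split_ifs at hc ⊢ <;> omega
  · refine cyc_char_inner hn (fun w => u - w) sub_right_injective ?_ u v (by simp) ?_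
    · intro w w'
      beta_reduce
      rw [sub_sub_sub_cancel_left w w' u, sub_sub_sub_cancel_left w' w u]
      rw [SimpleGraph.cycleGraph_adj']
      exact Or.comm
    · beta_reduce
      rw [fin_sub_val'] at hc ⊢
      split_ifs at hc ⊢ <;> omega

lemma four_ineq (a b ra rb : ℕ) :
    ((a:ℝ) - ra ≤ b ∧ (b:ℝ) ≤ a + ra ∧ (b:ℝ) - rb ≤ a ∧ (a:ℝ) ≤ b + rb) ↔
      (a ≤ b + ra ∧ b ≤ a + ra ∧ b ≤ a + rb ∧ a ≤ b + rb) := by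
  rw [sub_le_iff_le_add, sub_le_iff_le_add]
  constructor <;> rintro ⟨h1, h2, h3, h4⟩ <;>
    exact ⟨by exact_mod_cast h1, by exact_mod_cast h2, by exact_mod_cast h3, by exact_mod_cast h4⟩

/-- Positions for the glued-cycles realization. -/
def gPos (n m : ℕ) (u' v' : Fin m) (f₁ : Fin n → ℕ) (f₂ : Fin m → ℕ) :
    Fin n ⊕ {x : Fin m // x ≠ u' ∧ x ≠ v'} → ℕ
  | .inl w => f₁ w
  | .inr w => (n - 1) + (m - 1 - f₂ w.1) * n

/-- Radii for the glued-cycles realization. -/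
def gRad (n m : ℕ) (u' v' : Fin m) (f₁ : Fin n → ℕ) (f₂ : Fin m → ℕ) :
    Fin n ⊕ {x : Fin m // x ≠ u' ∧ x ≠ v'} → ℕ
  | .inl w => if f₁ w = 0 then (n-1) + (m-2)*n else if f₁ w = n-1 then n else 1
  | .inr w => if f₂ w.1 = 1 then (n-1) + (m-2)*n else n

/-- The graph obtained by identifying an edge of the cycle `Cₙ` with an edge
of the cycle `Cₘ` belongs to `c-AND(1)`. -/
theorem glue_cycles_mem_cand1 (n m : ℕ) (hn : 3 ≤ n) (hm : 3 ≤ m)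
    (u v : Fin n) (u' v' : Fin m)
    (huv : (SimpleGraph.cycleGraph n).Adj u v)
    (huv' : (SimpleGraph.cycleGraph m).Adj u' v') :
    InCAND1 (glueEdge (SimpleGraph.cycleGraph n) (SimpleGraph.cycleGraph m)
      u v u' v') := by
  obtain ⟨f₁, hf1lt, hf1inj, hf1u, hf1v, hf1adj⟩ := cyc_char hn huv
  obtain ⟨f₂, hf2lt, hf2inj, hf2u, hf2v, hf2adj⟩ := cyc_char hm huv'
  have hC : n ≤ (m-2)*n := Nat.le_mul_of_pos_left n (by omega)
  have hbnd : ∀ w : {x : Fin m // x ≠ u' ∧ x ≠ v'}, 1 ≤ f₂ w.1 ∧ f₂ w.1 ≤ m - 2 := by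
    rintro ⟨w, hw1, hw2⟩
    dsimp only
    constructor
    · rcases Nat.eq_zero_or_pos (f₂ w) with h | h
      · exact absurd (hf2inj (h.trans hf2u.symm)) hw1
      · omega
    · have hlt := hf2lt w
      rcases Nat.lt_or_ge (f₂ w) (m-1) with h | h
      · omega
      · have he : f₂ w = m - 1 := by omega
        exact absurd (hf2inj (he.trans hf2v.symm)) hw2
  have hadju : ∀ w : Fin m, 1 ≤ f₂ w → f₂ w ≤ m - 2 →
      ((SimpleGraph.cycleGraph m).Adj u' w ↔ f₂ w = 1) := by
    intro w h1 h2
    rw [hf2adj u' w, hf2u]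
    omega
  have hadjv : ∀ w : Fin m, 1 ≤ f₂ w → f₂ w ≤ m - 2 →
      ((SimpleGraph.cycleGraph m).Adj v' w ↔ f₂ w = m - 2) := by
    intro w h1 h2
    rw [hf2adj v' w, hf2v]
    omega
  have hwu : ∀ w : Fin n, w = u ↔ f₁ w = 0 :=
    fun w => ⟨fun h => h ▸ hf1u, fun h => hf1inj (h.trans hf1u.symm)⟩
  have hwv : ∀ w : Fin n, w = v ↔ f₁ w = n - 1 :=
    fun w => ⟨fun h => h ▸ hf1v, fun h => hf1inj (h.trans hf1v.symm)⟩
  refine ⟨fun A => (gPos n m u' v' f₁ f₂ A : ℝ) - gRad n m u' v' f₁ f₂ A,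
          fun A => (gPos n m u' v' f₁ f₂ A : ℝ) + gRad n m u' v' f₁ f₂ A,
          fun A => (gPos n m u' v' f₁ f₂ A : ℝ), ⟨?_, ?_⟩, ?_⟩
  · intro A
    have h0 : (0:ℝ) ≤ (gRad n m u' v' f₁ f₂ A : ℝ) := Nat.cast_nonneg _
    dsimp only
    constructor <;> linarith
  · rintro (w | b) (w' | b') hne
    · -- inl / inl
      have hne' : f₁ w ≠ f₁ w' := fun h => hne (congrArg Sum.inl (hf1inj h))
      have h1 := hf1lt w; have h2 := hf1lt w'
      simp only [glueEdge_adj_inl_inl, gPos, gRad]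
      rw [four_ineq, hf1adj w w']
      split_ifs <;> omega
    · -- inl / inr
      obtain ⟨hb1, hb2⟩ := hbnd b'
      have h1 := hf1lt w
      have hXn : n ≤ (m-1-f₂ b'.1)*n := Nat.le_mul_of_pos_left n (by omega)
      have hXC : (m-1-f₂ b'.1)*n ≤ (m-2)*n := Nat.mul_le_mul (by omega) (Nat.le_refl n)
      have hD : (f₂ b'.1 = m - 2 ∧ (m-1-f₂ b'.1)*n = n) ∨
          (f₂ b'.1 + 3 ≤ m ∧ 2*n ≤ (m-1-f₂ b'.1)*n) := by
        rcases Nat.lt_or_ge (f₂ b'.1) (m-2) with h | h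
        · right
          refine ⟨by omega, ?_⟩
          have := Nat.mul_le_mul (show 2 ≤ m-1-f₂ b'.1 by omega) (Nat.le_refl n)
          omega
        · left
          have he : f₂ b'.1 = m-2 := by omega
          refine ⟨he, ?_⟩
          rw [he, show m-1-(m-2) = 1 from by omega, one_mul]
      simp only [glueEdge_adj_inl_inr, gPos, gRad]
      rw [four_ineq, hwu w, hwv w, hadju b'.1 hb1 hb2, hadjv b'.1 hb1 hb2]
      split_ifs <;> omega
    · -- inr / inl
      obtain ⟨hb1, hb2⟩ := hbnd b
      have h1 := hf1lt w'
      have hXn : n ≤ (m-1-f₂ b.1)*n := Nat.le_mul_of_pos_left n (by omega)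
      have hXC : (m-1-f₂ b.1)*n ≤ (m-2)*n := Nat.mul_le_mul (by omega) (Nat.le_refl n)
      have hD : (f₂ b.1 = m - 2 ∧ (m-1-f₂ b.1)*n = n) ∨
          (f₂ b.1 + 3 ≤ m ∧ 2*n ≤ (m-1-f₂ b.1)*n) := by
        rcases Nat.lt_or_ge (f₂ b.1) (m-2) with h | h
        · right
          refine ⟨by omega, ?_⟩
          have := Nat.mul_le_mul (show 2 ≤ m-1-f₂ b.1 by omega) (Nat.le_refl n)
          omega
        · left
          have he : f₂ b.1 = m-2 := by omega
          refine ⟨he, ?_⟩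
          rw [he, show m-1-(m-2) = 1 from by omega, one_mul]
      simp only [glueEdge_adj_inr_inl, gPos, gRad]
      rw [four_ineq, hwu w', hwv w', hadju b.1 hb1 hb2, hadjv b.1 hb1 hb2]
      split_ifs <;> omega
    · -- inr / inr
      obtain ⟨h1, h2⟩ := hbnd b
      obtain ⟨h1', h2'⟩ := hbnd b'
      have hbb : f₂ b.1 ≠ f₂ b'.1 := by
        intro h
        exact hne (congrArg Sum.inr (Subtype.ext (hf2inj h)))
      have hE : (f₂ b.1 + 1 = f₂ b'.1 ∧ (m-1-f₂ b.1)*n = (m-1-f₂ b'.1)*n + n) ∨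
          (f₂ b'.1 + 1 = f₂ b.1 ∧ (m-1-f₂ b'.1)*n = (m-1-f₂ b.1)*n + n) ∨
          (f₂ b.1 + 2 ≤ f₂ b'.1 ∧ (m-1-f₂ b'.1)*n + 2*n ≤ (m-1-f₂ b.1)*n) ∨
          (f₂ b'.1 + 2 ≤ f₂ b.1 ∧ (m-1-f₂ b.1)*n + 2*n ≤ (m-1-f₂ b'.1)*n) := by
        rcases (show f₂ b.1 + 1 = f₂ b'.1 ∨ f₂ b'.1 + 1 = f₂ b.1 ∨
            f₂ b.1 + 2 ≤ f₂ b'.1 ∨ f₂ b'.1 + 2 ≤ f₂ b.1 from by omega) with h|h|h|h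
        · left
          refine ⟨h, ?_⟩
          rw [show m-1-f₂ b.1 = (m-1-f₂ b'.1) + 1 from by omega, add_mul, one_mul]
        · right; left
          refine ⟨h, ?_⟩
          rw [show m-1-f₂ b'.1 = (m-1-f₂ b.1) + 1 from by omega, add_mul, one_mul]
        · right; right; left
          refine ⟨h, ?_⟩
          have := Nat.mul_le_mul (show (m-1-f₂ b'.1) + 2 ≤ m-1-f₂ b.1 from by omega)
            (Nat.le_refl n)
          rw [add_mul] at this
          omega
        · right; right; right
          refine ⟨h, ?_⟩
          have := Nat.mul_le_mul (show (m-1-f₂ b.1) + 2 ≤ m-1-f₂ b'.1 from by omega)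
            (Nat.le_refl n)
          rw [add_mul] at this
          omega
      simp only [glueEdge_adj_inr_inr, gPos, gRad]
      rw [four_ineq, hf2adj b.1 b'.1]
      split_ifs <;> omega
  · intro A
    dsimp only
    ring
end

section
/- For all path lengths l_z ≥ l_y ≥ l_x ≥ 4, the theta graph H^{l_x,l_y,l_z}, consisting of two non-adjacent vertices a and b joined by three internally vertex-disjoint paths of edge-lengths l_x, l_y, l_z, does not belong to AND(1). -/
/-- `G` is the theta graph `H^{lx, ly, lz}`: two distinct vertices `a = X 0`
and `b = X (last)` joined by three internally vertex-disjoint paths `X`, `Y`,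
`Z` of edge-lengths `lx`, `ly`, `lz`, these being all the vertices and (the
consecutive pairs along the paths) all the edges of `G`. -/
def IsThetaGraph {V : Type*} (G : SimpleGraph V) (lx ly lz : ℕ) : Prop :=
  ∃ (X : Fin (lx + 1) → V) (Y : Fin (ly + 1) → V) (Z : Fin (lz + 1) → V),
    Function.Injective X ∧ Function.Injective Y ∧ Function.Injective Z ∧
    X 0 = Y 0 ∧ Y 0 = Z 0 ∧
    X (Fin.last lx) = Y (Fin.last ly) ∧ Y (Fin.last ly) = Z (Fin.last lz) ∧
    (∀ i j, X i = Y j → (i = 0 ∧ j = 0) ∨ (i = Fin.last lx ∧ j = Fin.last ly)) ∧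
    (∀ i j, X i = Z j → (i = 0 ∧ j = 0) ∨ (i = Fin.last lx ∧ j = Fin.last lz)) ∧
    (∀ i j, Y i = Z j → (i = 0 ∧ j = 0) ∨ (i = Fin.last ly ∧ j = Fin.last lz)) ∧
    (∀ v : V, (∃ i, X i = v) ∨ (∃ i, Y i = v) ∨ (∃ i, Z i = v)) ∧
    (∀ u v : V, G.Adj u v ↔
      ((∃ i : Fin lx, (X i.castSucc = u ∧ X i.succ = v) ∨
          (X i.castSucc = v ∧ X i.succ = u)) ∨
       (∃ i : Fin ly, (Y i.castSucc = u ∧ Y i.succ = v) ∨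
          (Y i.castSucc = v ∧ Y i.succ = u)) ∨
       (∃ i : Fin lz, (Z i.castSucc = u ∧ Z i.succ = v) ∨
          (Z i.castSucc = v ∧ Z i.succ = u))))


section Model

theorem fourPoint_of_model {V : Type*} [Finite V] {G : SimpleGraph V}
    (h : InAND1 G) : ∃ f : V → ℝ, FourPointCond G f := by
  classical
  obtain ⟨L, R, p, hp, hadj⟩ := h
  cases isEmpty_or_nonempty V
  · exact ⟨fun _ => 0, fun u v _ => (IsEmpty.false u).elim,
      fun x _ _ _ _ _ _ _ _ => (IsEmpty.false x).elim⟩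
  have : Fintype V := Fintype.ofFinite V
  -- minimal positive gap between p-values
  set s : Finset ℝ := (Finset.univ.image fun uv : V × V => |p uv.1 - p uv.2|).filter (0 < ·) with hs
  set δ : ℝ := if hne : s.Nonempty then s.min' hne else 1 with hδ
  have hδpos : 0 < δ := by
    by_cases hne : s.Nonempty
    · have hd : δ = s.min' hne := dif_pos hne
      have h2 := Finset.mem_filter.1 (s.min'_mem hne)
      rw [hd]; exact h2.2
    · have hd : δ = 1 := dif_neg hne
      rw [hd]; norm_num
  have hgap : ∀ u v : V, p u ≠ p v → δ ≤ |p u - p v| := by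
    intro u v huv
    have hmem : |p u - p v| ∈ s := by
      rw [hs]
      refine Finset.mem_filter.2 ⟨Finset.mem_image.2 ⟨(u, v), Finset.mem_univ _, rfl⟩, ?_⟩
      simpa [abs_pos, sub_ne_zero] using huv
    have hne : s.Nonempty := ⟨_, hmem⟩
    have hd : δ = s.min' hne := dif_pos hne
    rw [hd]; exact s.min'_le _ hmem
  -- injective tie-breaker
  obtain ⟨e⟩ := Fintype.truncEquivFin V
  set n : ℕ := Fintype.card V
  set ε : ℝ := δ / (2 * n + 2) with hε
  have hεpos : 0 < ε := by positivity
  set f : V → ℝ := fun v => p v + ε * (e v : ℝ) with hf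
  have hbound : ∀ v : V, 0 ≤ ε * (e v : ℝ) ∧ ε * (e v : ℝ) < δ := by
    intro v
    constructor
    · positivity
    · have h1 : ((e v : ℕ) : ℝ) < n := by
        exact_mod_cast (e v).2
      have : ε * (e v : ℝ) < ε * n := by
        rcases Nat.eq_zero_or_pos (e v : ℕ) with h0 | h0
        · simp [h0]; positivity
        · exact mul_lt_mul_of_pos_left h1 hεpos
      calc ε * (e v : ℝ) < ε * n := this
        _ ≤ δ / 2 := by
            rw [hε]
            rw [div_mul_eq_mul_div, div_le_div_iff₀ (by positivity) (by norm_num)]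
            ring_nf
            nlinarith [hδpos, (Nat.cast_nonneg n : (0:ℝ) ≤ n)]
        _ < δ := by linarith
  -- f-order refines p-order
  have hmono : ∀ u v : V, f u < f v → p u ≤ p v := by
    intro u v huv
    by_contra hlt
    push_neg at hlt
    have hne : p u ≠ p v := ne_of_gt hlt
    have h1 : δ ≤ |p u - p v| := hgap u v hne
    rw [abs_of_pos (by linarith)] at h1
    have h2 := (hbound u).1
    have h3 := (hbound v).2
    rw [hf] at huv
    simp only at huv
    linarith
  have hinj : Function.Injective f := by
    intro u v huv
    rw [hf] at huv; simp only at huv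
    by_cases hpe : p u = p v
    · have : ε * (e u : ℝ) = ε * (e v : ℝ) := by linarith
      have : ((e u : ℕ) : ℝ) = ((e v : ℕ) : ℝ) := by
        exact mul_left_cancel₀ (ne_of_gt hεpos) this
      have : (e u : ℕ) = (e v : ℕ) := by exact_mod_cast this
      exact e.injective (Fin.ext this)
    · have h1 : δ ≤ |p u - p v| := hgap u v hpe
      have h2 := (hbound u).1
      have h3 := (hbound u).2
      have h4 := (hbound v).1
      have h5 := (hbound v).2
      rcases abs_cases (p u - p v) with ⟨he, _⟩ | ⟨he, _⟩ <;> rw [he] at h1 <;> [skip; skip] <;>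
        linarith
  refine ⟨f, hinj, fun x u v y h1 h2 h3 hxv huy => ?_⟩
  have huv : u ≠ v := fun he => absurd (he ▸ h2) (lt_irrefl _)
  have pxu := hmono _ _ h1
  have puv := hmono _ _ h2
  have pvy := hmono _ _ h3
  have hx := (hadj x v hxv.ne).1 hxv
  have hy := (hadj u y huy.ne).1 huy
  refine (hadj u v huv).2 ⟨?_, ?_, ?_, ?_⟩
  · exact le_trans (hp u).1 puv
  · exact le_trans pvy hy.2.1
  · exact le_trans hx.2.2.1 pxu
  · exact le_trans puv (hp v).2

end Model

/-! ### Auxiliary development -/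

section Aux

variable {V : Type*} {G : SimpleGraph V} {f : V → ℝ}

theorem fpc_neg (hf : FourPointCond G f) : FourPointCond G (fun v => -(f v)) := by
  refine ⟨fun u v huv => hf.1 (by linarith [neg_injective huv] : f u = f v), ?_⟩
  intro x u v y h1 h2 h3 hxv huy
  simp only [neg_lt_neg_iff] at h1 h2 h3
  exact (hf.2 y v u x h3 h2 h1 huy.symm hxv.symm).symm

/-- The trap lemma: a vertex strictly inside the span of an edge, not adjacent
to either endpoint, has all its neighbours strictly inside the span. -/
theorem trap (hf : FourPointCond G f) {x y u : V}
    (hxy : G.Adj x y) (hux : ¬ G.Adj u x) (huy : ¬ G.Adj u y)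
    (h1 : f x < f u) (h2 : f u < f y) :
    ∀ t, G.Adj u t → f x < f t ∧ f t < f y := by
  intro t hut
  constructor
  · by_contra hle
    push_neg at hle
    rcases eq_or_lt_of_le hle with he | hlt
    · exact hux (by rwa [hf.1 he] at hut)
    · exact hux (hf.2 t x u y hlt h1 h2 (G.adj_symm hut) hxy).symm
  · by_contra hle
    push_neg at hle
    rcases eq_or_lt_of_le hle with he | hlt
    · exact huy (by rwa [← hf.1 he] at hut)
    · exact huy (hf.2 x u y t h1 h2 hlt hxy hut)

/-- Repackaged theta-graph data with `ℕ`-indexed paths. -/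
structure TD (V : Type*) (G : SimpleGraph V) where
  w : Fin 3 → ℕ → V
  l : Fin 3 → ℕ
  a : V
  b : V
  hl : ∀ k, 4 ≤ l k
  h0 : ∀ k, w k 0 = a
  hwl : ∀ k, w k (l k) = b
  inj : ∀ k ⦃i j : ℕ⦄, i ≤ l k → j ≤ l k → w k i = w k j → i = j
  cross : ∀ ⦃k k'⦄, k ≠ k' → ∀ ⦃i j : ℕ⦄, i ≤ l k → j ≤ l k' → w k i = w k' j →
      (i = 0 ∧ j = 0) ∨ (i = l k ∧ j = l k')
  adj : ∀ ⦃u v⦄, G.Adj u v ↔ ∃ k i, i < l k ∧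
      ((w k i = u ∧ w k (i+1) = v) ∨ (w k i = v ∧ w k (i+1) = u))
  cover : ∀ v, ∃ k i, i ≤ l k ∧ w k i = v

namespace TD

variable {t : TD V G}

theorem adjw (t : TD V G) (k : Fin 3) {i : ℕ} (hi : i < t.l k) : G.Adj (t.w k i) (t.w k (i+1)) :=
  t.adj.2 ⟨k, i, hi, Or.inl ⟨rfl, rfl⟩⟩

/-- Same-path non-adjacency of non-consecutive vertices (covers `a`, `b` as
endpoints of any path). -/
theorem na (t : TD V G) (k : Fin 3) {i j : ℕ} (hij : i + 2 ≤ j) (hj : j ≤ t.l k) :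
    ¬ G.Adj (t.w k i) (t.w k j) := by
  intro hadj
  rcases t.adj.1 hadj with ⟨k', i', hi', H⟩
  have h4 := t.hl k'
  have h4k := t.hl k
  by_cases hkk : k' = k
  · subst hkk
    rcases H with ⟨e1, e2⟩ | ⟨e1, e2⟩
    · have := t.inj k' (le_of_lt hi') (by omega) e1
      have := t.inj k' (by omega) hj e2
      omega
    · have := t.inj k' (le_of_lt hi') hj e1
      have := t.inj k' (by omega) (by omega) e2
      omega
  · rcases H with ⟨e1, e2⟩ | ⟨e1, e2⟩
    · rcases t.cross hkk (le_of_lt hi') (by omega) e1 with ⟨u1, u2⟩ | ⟨u1, u2⟩ <;>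
        rcases t.cross hkk (by omega) hj e2 with ⟨v1, v2⟩ | ⟨v1, v2⟩ <;> omega
    · rcases t.cross hkk (le_of_lt hi') hj e1 with ⟨u1, u2⟩ | ⟨u1, u2⟩ <;>
        rcases t.cross hkk (by omega) (by omega) e2 with ⟨v1, v2⟩ | ⟨v1, v2⟩ <;> omega

/-- Cross-path non-adjacency of interior vertices. -/
theorem nc (t : TD V G) ⦃k k' : Fin 3⦄ (hkk : k ≠ k') ⦃i j : ℕ⦄ (hi0 : 0 < i) (hi : i < t.l k)
    (hj0 : 0 < j) (hj : j < t.l k') : ¬ G.Adj (t.w k i) (t.w k' j) := by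
  intro hadj
  rcases t.adj.1 hadj with ⟨k'', i'', hi'', H⟩
  have h4 := t.hl k''
  have h4k := t.hl k
  have h4k' := t.hl k'
  rcases H with ⟨e1, e2⟩ | ⟨e1, e2⟩
  · by_cases h1 : k'' = k
    · subst h1
      have := t.inj k'' (le_of_lt hi'') (le_of_lt hi) e1
      by_cases h2 : k'' = k'
      · exact hkk h2
      · rcases t.cross h2 (by omega) (le_of_lt hj) e2 with ⟨u1, u2⟩ | ⟨u1, u2⟩ <;> omega
    · rcases t.cross h1 (le_of_lt hi'') (le_of_lt hi) e1 with ⟨u1, u2⟩ | ⟨u1, u2⟩ <;> omega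
  · by_cases h1 : k'' = k'
    · subst h1
      have := t.inj k'' (le_of_lt hi'') (le_of_lt hj) e1
      by_cases h2 : k'' = k
      · exact hkk h2.symm
      · rcases t.cross h2 (by omega) (le_of_lt hi) e2 with ⟨u1, u2⟩ | ⟨u1, u2⟩ <;> omega
    · rcases t.cross h1 (le_of_lt hi'') (le_of_lt hj) e1 with ⟨u1, u2⟩ | ⟨u1, u2⟩ <;> omega

/-- An interior vertex of one path differs from every vertex of another path. -/
theorem necr (t : TD V G) ⦃k k' : Fin 3⦄ (hkk : k ≠ k') ⦃i j : ℕ⦄ (hi0 : 0 < i) (hi : i < t.l k)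
    (hj : j ≤ t.l k') : t.w k i ≠ t.w k' j := by
  intro he
  rcases t.cross hkk (le_of_lt hi) hj he with ⟨u1, u2⟩ | ⟨u1, u2⟩ <;> omega

theorem nes (t : TD V G) (k : Fin 3) ⦃i j : ℕ⦄ (hij : i ≠ j) (hi : i ≤ t.l k) (hj : j ≤ t.l k) :
    t.w k i ≠ t.w k j := fun he => hij (t.inj k hi hj he)

theorem ne_ab (t : TD V G) : t.a ≠ t.b := by
  have := t.nes 0 (show (0:ℕ) ≠ t.l 0 by have := t.hl 0; omega) (by omega) le_rfl
  rwa [t.h0 0, t.hwl 0] at this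

theorem not_adj_ab (t : TD V G) : ¬ G.Adj t.a t.b := by
  have := t.na 0 (show 0 + 2 ≤ t.l 0 by have := t.hl 0; omega) le_rfl
  rwa [t.h0 0, t.hwl 0] at this

theorem finiteV (t : TD V G) : Finite V := by
  have : Function.Surjective
      (fun p : Fin 3 × Fin ((t.l 0 + t.l 1 + t.l 2) + 1) =>
        t.w p.1 (min p.2 (t.l p.1))) := by
    intro v
    obtain ⟨k, i, hi, hv⟩ := t.cover v
    refine ⟨⟨k, ⟨i, ?_⟩⟩, ?_⟩
    · fin_cases k <;> simp at hi ⊢ <;> omega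
    · simp only
      rw [min_eq_left (by simpa using hi)]
      exact hv
  exact Finite.of_surjective _ this

/-- Reversal of all three paths (swaps `a` and `b`). -/
def rev (t : TD V G) : TD V G where
  w := fun k i => t.w k (t.l k - i)
  l := t.l
  a := t.b
  b := t.a
  hl := t.hl
  h0 := fun k => by simpa using t.hwl k
  hwl := fun k => by simpa using t.h0 k
  inj := fun k i j hi hj he => by
    have := t.inj k (Nat.sub_le _ _) (Nat.sub_le _ _) he
    omega
  cross := fun k k' hkk i j hi hj he => by
    have := t.cross hkk (Nat.sub_le _ _) (Nat.sub_le _ _) he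
    omega
  adj := by
    intro u v
    rw [t.adj]
    constructor
    · rintro ⟨k, i, hi, H⟩
      refine ⟨k, t.l k - (i+1), by omega, ?_⟩
      have e1 : t.l k - (t.l k - (i + 1)) = i + 1 := by omega
      have e2 : t.l k - (t.l k - (i + 1) + 1) = i := by omega
      rw [e1, e2]
      tauto
    · rintro ⟨k, i, hi, H⟩
      refine ⟨k, t.l k - (i+1), by omega, ?_⟩
      have e2 : t.l k - (i + 1) + 1 = t.l k - i := by omega
      rw [e2]
      tauto
  cover := fun v => by
    obtain ⟨k, i, hi, hv⟩ := t.cover v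
    exact ⟨k, t.l k - i, by omega, by simpa [Nat.sub_sub_self hi] using hv⟩

end TD

end Aux

section Kills

variable {V : Type*} {G : SimpleGraph V} {f : V → ℝ}

open TD

/-- Distinct vertices have distinct `f`-values. -/
theorem fne (hf : FourPointCond G f) {u v : V} (h : u ≠ v) : f u ≠ f v :=
  fun he => h (hf.1 he)

/-- Kill: `b` is the global (strict) maximum. -/
theorem K1 (t : TD V G) (hf : FourPointCond G f) (hab : f t.a < f t.b)
    (hb : ∀ v, v ≠ t.b → f v < f t.b) : False := by
  have h4 : ∀ k, 4 ≤ t.l k := t.hl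
  -- the neighbours of b
  have hnb : ∀ k, G.Adj (t.w k (t.l k - 1)) t.b := by
    intro k
    have := t.adjw k (show t.l k - 1 < t.l k by have := h4 k; omega)
    rwa [show t.l k - 1 + 1 = t.l k by have := h4 k; omega, t.hwl k] at this
  have hnint : ∀ k, t.w k (t.l k - 1) ≠ t.b := by
    intro k
    have := t.nes k (show t.l k - 1 ≠ t.l k by have := h4 k; omega)
      (by omega) le_rfl
    rwa [t.hwl k] at this
  -- ladder
  have ladder : ∀ k j : Fin 3, k ≠ j → f t.a < f (t.w j (t.l j - 1)) →
      ∀ i, i ≤ t.l k - 1 → f (t.w k i) < f (t.w j (t.l j - 1)) := by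
    intro k j hkj hfa i
    induction i with
    | zero => intro _; rw [t.h0 k]; exact hfa
    | succ i ih =>
      intro hi
      have h4k := h4 k; have h4j := h4 j
      have hx := ih (by omega)
      by_contra hle
      push_neg at hle
      have hne : t.w j (t.l j - 1) ≠ t.w k (i+1) :=
        t.necr hkj.symm (by omega) (by omega) (by omega)
      have hlt : f (t.w j (t.l j - 1)) < f (t.w k (i+1)) :=
        lt_of_le_of_ne hle (fne hf hne)
      have hvb : f (t.w k (i+1)) < f t.b := by
        refine hb _ ?_
        have := t.nes k (show i + 1 ≠ t.l k by omega) (by omega) le_rfl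
        rwa [t.hwl k] at this
      have := hf.2 (t.w k i) (t.w j (t.l j - 1)) (t.w k (i+1)) t.b hx hlt hvb
        (t.adjw k (by omega)) (hnb j)
      exact t.nc hkj.symm (show 0 < t.l j - 1 by omega) (by omega)
        (show 0 < i + 1 by omega) (by omega) this
  -- at most one penultimate vertex above a
  have pair : ∀ k j : Fin 3, k ≠ j → f t.a < f (t.w j (t.l j - 1)) →
      f t.a < f (t.w k (t.l k - 1)) → False := by
    intro k j hkj hj hk
    have h1 := ladder k j hkj hj (t.l k - 1) le_rfl
    have h2 := ladder j k hkj.symm hk (t.l j - 1) le_rfl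
    linarith
  -- final contradiction from two low penultimates
  have final : ∀ k₁ k₂ : Fin 3, k₁ ≠ k₂ → f (t.w k₁ (t.l k₁ - 1)) < f (t.w k₂ (t.l k₂ - 1)) →
      f (t.w k₂ (t.l k₂ - 1)) < f t.a → False := by
    intro k₁ k₂ hne h12 h2a
    have h41 := h4 k₁; have h42 := h4 k₂
    have hana : ¬ G.Adj t.a (t.w k₂ (t.l k₂ - 1)) := by
      have := t.na k₂ (show 0 + 2 ≤ t.l k₂ - 1 by omega) (by omega)
      rwa [t.h0 k₂] at this
    have htrap := trap hf (hnb k₂) hana t.not_adj_ab h2a hab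
    -- cascade along path k₁
    have casc : ∀ i, 1 ≤ i → i ≤ t.l k₁ - 2 →
        f (t.w k₂ (t.l k₂ - 1)) < f (t.w k₁ i) ∧ f (t.w k₁ i) < f t.b := by
      intro i
      induction i with
      | zero => omega
      | succ i ih =>
        intro _ hi
        rcases Nat.eq_zero_or_pos i with h0 | hpos
        · subst h0
          refine htrap _ ?_
          have := t.adjw k₁ (show 0 < t.l k₁ by omega)
          rwa [t.h0 k₁] at this
        · have hih := ih hpos (by omega)
          have hux : ¬ G.Adj (t.w k₁ i) (t.w k₂ (t.l k₂ - 1)) :=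
            t.nc hne (by omega) (by omega) (by omega) (by omega)
          have huy : ¬ G.Adj (t.w k₁ i) t.b := by
            have := t.na k₁ (show i + 2 ≤ t.l k₁ by omega) le_rfl
            rwa [t.hwl k₁] at this
          exact trap hf (hnb k₂) hux huy hih.1 hih.2 _ (t.adjw k₁ (by omega))
    have hd := casc (t.l k₁ - 2) (by omega) le_rfl
    have hxv : G.Adj (t.w k₁ (t.l k₁ - 1)) (t.w k₁ (t.l k₁ - 2)) := by
      have := t.adjw k₁ (show t.l k₁ - 2 < t.l k₁ by omega)
      rw [show t.l k₁ - 2 + 1 = t.l k₁ - 1 by omega] at this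
      exact this.symm
    have := hf.2 (t.w k₁ (t.l k₁ - 1)) (t.w k₂ (t.l k₂ - 1)) (t.w k₁ (t.l k₁ - 2)) t.b
      h12 hd.1 hd.2 hxv (hnb k₂)
    exact t.nc hne.symm (by omega) (by omega) (by omega) (by omega) this
  -- pick two penultimates below a
  have hdec : ∀ k : Fin 3, f (t.w k (t.l k - 1)) < f t.a ∨ f t.a < f (t.w k (t.l k - 1)) := by
    intro k
    have hka : t.w k (t.l k - 1) ≠ t.a := by
      have := t.nes k (show t.l k - 1 ≠ 0 by have := h4 k; omega) (by omega) (by omega)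
      rwa [t.h0 k] at this
    rcases lt_or_gt_of_ne (fne hf hka) with h | h
    · exact Or.inl h
    · exact Or.inr h
  have two_low : ∃ k₁ k₂ : Fin 3, k₁ ≠ k₂ ∧ f (t.w k₁ (t.l k₁ - 1)) < f t.a ∧
      f (t.w k₂ (t.l k₂ - 1)) < f t.a := by
    rcases hdec 0 with h0 | h0
    · rcases hdec 1 with h1 | h1
      · exact ⟨0, 1, by decide, h0, h1⟩
      · rcases hdec 2 with h2 | h2
        · exact ⟨0, 2, by decide, h0, h2⟩
        · exact absurd (pair 1 2 (by decide) h2 h1) (fun h => h)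
    · rcases hdec 1 with h1 | h1
      · rcases hdec 2 with h2 | h2
        · exact ⟨1, 2, by decide, h1, h2⟩
        · exact absurd (pair 0 2 (by decide) h2 h0) (fun h => h)
      · exact absurd (pair 0 1 (by decide) h1 h0) (fun h => h)
  obtain ⟨k₁, k₂, hne, hl1, hl2⟩ := two_low
  have hvne : f (t.w k₁ (t.l k₁ - 1)) ≠ f (t.w k₂ (t.l k₂ - 1)) := by
    refine fne hf (t.necr hne ?_ ?_ ?_)
    · have := h4 k₁; omega
    · have := h4 k₁; omega
    · omega
  rcases lt_or_gt_of_ne hvne with h | h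
  · exact final k₁ k₂ hne h hl2
  · exact final k₂ k₁ hne.symm h hl1

end Kills

section KillsB

variable {V : Type*} {G : SimpleGraph V} {f : V → ℝ}

open TD

/-- Kill: the global min and max are interior vertices of different paths. -/
theorem K2 (t : TD V G) (hf : FourPointCond G f) {km kM : Fin 3} (hkk : km ≠ kM)
    {r s : ℕ} (hr0 : 0 < r) (hrl : r < t.l km) (hs0 : 0 < s) (hsl : s < t.l kM)
    (hm : ∀ v, v ≠ t.w km r → f (t.w km r) < f v)
    (hM : ∀ v, v ≠ t.w kM s → f v < f (t.w kM s)) : False := by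
  have h4m := t.hl km; have h4M := t.hl kM
  have hPM : G.Adj (t.w kM (s-1)) (t.w kM s) := by
    have := t.adjw kM (show s - 1 < t.l kM by omega)
    rwa [show s - 1 + 1 = s by omega] at this
  have hQM : G.Adj (t.w kM (s+1)) (t.w kM s) := (t.adjw kM hsl).symm
  -- engines
  have engP : ∀ x v, G.Adj x v → f x < f (t.w kM (s-1)) → f (t.w kM (s-1)) < f v →
      v ≠ t.w kM s → G.Adj (t.w kM (s-1)) v := by
    intro x v hadj h1 h2 hne
    exact hf.2 x (t.w kM (s-1)) v (t.w kM s) h1 h2 (hM v hne) hadj hPM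
  have engQ : ∀ x v, G.Adj x v → f x < f (t.w kM (s+1)) → f (t.w kM (s+1)) < f v →
      v ≠ t.w kM s → G.Adj (t.w kM (s+1)) v := by
    intro x v hadj h1 h2 hne
    exact hf.2 x (t.w kM (s+1)) v (t.w kM s) h1 h2 (hM v hne) hadj hQM
  -- the m-path stays below f P above index r
  have claim1 : ∀ d, r + d ≤ t.l km → f (t.w km (r + d)) < f (t.w kM (s-1)) := by
    intro d
    induction d with
    | zero =>
      intro _
      exact hm _ (t.necr hkk hr0 hrl (by omega)).symm |>.trans_le le_rfl
    | succ d ih =>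
      intro hd
      have hprev := ih (by omega)
      by_contra hle
      push_neg at hle
      have hvne : t.w km (r + d + 1) ≠ t.w kM (s - 1) := by
        by_cases hend : r + d + 1 = t.l km
        · rw [hend, t.hwl km, ← t.hwl kM]
          exact (t.nes kM (show s - 1 ≠ t.l kM by omega) (by omega) le_rfl).symm
        · exact t.necr hkk (by omega) (by omega) (by omega)
      have hlt : f (t.w kM (s-1)) < f (t.w km (r + d + 1)) :=
        lt_of_le_of_ne hle (fne hf hvne.symm)
      have hvneM : t.w km (r + d + 1) ≠ t.w kM s := by
        by_cases hend : r + d + 1 = t.l km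
        · rw [hend, t.hwl km, ← t.hwl kM]
          exact (t.nes kM (show s ≠ t.l kM by omega) (by omega) le_rfl).symm
        · exact t.necr hkk (by omega) (by omega) (by omega)
      have hadj := engP (t.w km (r + d)) (t.w km (r + d + 1))
        (t.adjw km (by omega)) hprev hlt hvneM
      by_cases hs1 : 2 ≤ s
      · by_cases hend : r + d + 1 = t.l km
        · rw [hend, t.hwl km, ← t.hwl kM] at hadj
          exact t.na kM (show s - 1 + 2 ≤ t.l kM by omega) le_rfl hadj
        · exact t.nc hkk.symm (by omega) (by omega) (by omega) (by omega) hadj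
      · have hs1' : s = 1 := by omega
        rw [hs1', show (1:ℕ) - 1 = 0 from rfl, t.h0 kM, ← t.h0 km] at hadj
        exact t.na km (show 0 + 2 ≤ r + d + 1 by omega) (by omega) hadj
  -- the m-path stays below f Q below index r
  have claim2 : ∀ d, d ≤ r → f (t.w km (r - d)) < f (t.w kM (s+1)) := by
    intro d
    induction d with
    | zero =>
      intro _
      exact hm _ (t.necr hkk hr0 hrl (by omega)).symm
    | succ d ih =>
      intro hd
      have hprev := ih (by omega)
      by_contra hle
      push_neg at hle
      have hvne : t.w km (r - (d+1)) ≠ t.w kM (s + 1) := by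
        by_cases hend : r - (d+1) = 0
        · rw [hend, t.h0 km, ← t.h0 kM]
          exact t.nes kM (show (0:ℕ) ≠ s + 1 by omega) (by omega) (by omega)
        · exact t.necr hkk (by omega) (by omega) (by omega)
      have hlt : f (t.w kM (s+1)) < f (t.w km (r - (d+1)))  :=
        lt_of_le_of_ne hle (fne hf hvne.symm)
      have hvneM : t.w km (r - (d+1)) ≠ t.w kM s := by
        by_cases hend : r - (d+1) = 0
        · rw [hend, t.h0 km, ← t.h0 kM]
          exact t.nes kM (show (0:ℕ) ≠ s by omega) (by omega) (by omega)
        · exact t.necr hkk (by omega) (by omega) (by omega)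
      have hedge : G.Adj (t.w km (r - d)) (t.w km (r - (d+1))) := by
        have := t.adjw km (show r - (d+1) < t.l km by omega)
        rw [show r - (d+1) + 1 = r - d by omega] at this
        exact this.symm
      have hadj := engQ (t.w km (r - d)) (t.w km (r - (d+1))) hedge hprev hlt hvneM
      by_cases hsl1 : s + 1 < t.l kM
      · by_cases hend : r - (d+1) = 0
        · rw [hend, t.h0 km, ← t.h0 kM] at hadj
          exact t.na kM (show 0 + 2 ≤ s + 1 by omega) (by omega) hadj.symm
        · exact t.nc hkk.symm (by omega) (by omega) (by omega) (by omega) hadj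
      · have hQb : s + 1 = t.l kM := by omega
        rw [hQb, t.hwl kM, ← t.hwl km] at hadj
        exact t.na km (show r - (d+1) + 2 ≤ t.l km by omega) le_rfl hadj.symm
  -- dichotomy on the two neighbours of M
  have hPQ : f (t.w kM (s-1)) ≠ f (t.w kM (s+1)) :=
    fne hf (t.nes kM (show s - 1 ≠ s + 1 by omega) (by omega) (by omega))
  rcases lt_or_gt_of_ne hPQ with hPQ | hPQ
  · -- suffix of the M-path climbs above f P, but b is below f P
    have claim3 : ∀ d, s + 1 + d ≤ t.l kM → f (t.w kM (s-1)) < f (t.w kM (s+1+d)) := by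
      intro d
      induction d with
      | zero => intro _; exact hPQ
      | succ d ih =>
        intro hd
        have hprev := ih (by omega)
        by_contra hle
        push_neg at hle
        have hlt : f (t.w kM (s+1+d+1)) < f (t.w kM (s-1)) :=
          lt_of_le_of_ne hle (fne hf (t.nes kM (show s+1+d+1 ≠ s-1 by omega)
            (by omega) (by omega)))
        have hadj := engP (t.w kM (s+1+d+1)) (t.w kM (s+1+d))
          (by
            have := t.adjw kM (show s+1+d < t.l kM by omega)
            exact this.symm) hlt hprev
          (t.nes kM (show s+1+d ≠ s by omega) (by omega) (by omega))
        exact t.na kM (show s - 1 + 2 ≤ s + 1 + d by omega) (by omega) hadj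
    have h1 := claim3 (t.l kM - s - 1) (by omega)
    have h2 := claim1 (t.l km - r) (by omega)
    rw [show s + 1 + (t.l kM - s - 1) = t.l kM by omega, t.hwl kM] at h1
    rw [show r + (t.l km - r) = t.l km by omega, t.hwl km] at h2
    linarith
  · -- prefix of the M-path stays above f Q, but a is below f Q
    have claim4 : ∀ d, d ≤ s - 1 → f (t.w kM (s+1)) < f (t.w kM (s-1-d)) := by
      intro d
      induction d with
      | zero => intro _; exact hPQ
      | succ d ih =>
        intro hd
        have hprev := ih (by omega)
        by_contra hle
        push_neg at hle
        have hlt : f (t.w kM (s-1-(d+1))) < f (t.w kM (s+1)) :=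
          lt_of_le_of_ne hle (fne hf (t.nes kM (show s-1-(d+1) ≠ s+1 by omega)
            (by omega) (by omega)))
        have hedge : G.Adj (t.w kM (s-1-(d+1))) (t.w kM (s-1-d)) := by
          have := t.adjw kM (show s-1-(d+1) < t.l kM by omega)
          rwa [show s-1-(d+1) + 1 = s-1-d by omega] at this
        have hadj := engQ (t.w kM (s-1-(d+1))) (t.w kM (s-1-d)) hedge hlt hprev
          (t.nes kM (show s-1-d ≠ s by omega) (by omega) (by omega))
        exact t.na kM (show s - 1 - d + 2 ≤ s + 1 by omega) (by omega) hadj.symm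
    have h1 := claim4 (s-1) (by omega)
    have h2 := claim2 r (by omega)
    rw [show s - 1 - (s-1) = 0 by omega, t.h0 kM] at h1
    rw [show r - r = 0 by omega, t.h0 km] at h2
    linarith

end KillsB

section KillsC

variable {V : Type*} {G : SimpleGraph V} {f : V → ℝ}

open TD

/-- Kill: min and max are interior on the same path, non-adjacent, min first. -/
theorem K3 (t : TD V G) (hf : FourPointCond G f) {k : Fin 3}
    {r s : ℕ} (hr0 : 0 < r) (hrs : r + 2 ≤ s) (hsl : s < t.l k)
    (hm : ∀ v, v ≠ t.w k r → f (t.w k r) < f v)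
    (hM : ∀ v, v ≠ t.w k s → f v < f (t.w k s)) : False := by
  have h4 := t.hl k
  have hmP : G.Adj (t.w k r) (t.w k (r-1)) := by
    have := t.adjw k (show r - 1 < t.l k by omega)
    rw [show r - 1 + 1 = r by omega] at this
    exact this.symm
  have hmQ : G.Adj (t.w k r) (t.w k (r+1)) := t.adjw k (by omega)
  -- floor engines anchored at m
  have fengP : ∀ x v, G.Adj x v → f x < f (t.w k (r-1)) → f (t.w k (r-1)) < f v →
      x ≠ t.w k r → G.Adj x (t.w k (r-1)) := by
    intro x v hadj h1 h2 hne
    exact hf.2 (t.w k r) x (t.w k (r-1)) v (hm x hne) h1 h2 hmP hadj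
  have fengQ : ∀ x v, G.Adj x v → f x < f (t.w k (r+1)) → f (t.w k (r+1)) < f v →
      x ≠ t.w k r → G.Adj x (t.w k (r+1)) := by
    intro x v hadj h1 h2 hne
    exact hf.2 (t.w k r) x (t.w k (r+1)) v (hm x hne) h1 h2 hmQ hadj
  -- step (*) : f P₀ < f Q₀
  have hstar : f (t.w k (r-1)) < f (t.w k (r+1)) := by
    by_contra hle
    push_neg at hle
    have hQ0P0 : f (t.w k (r+1)) < f (t.w k (r-1)) :=
      lt_of_le_of_ne hle (fne hf (t.nes k (show r+1 ≠ r-1 by omega) (by omega) (by omega)))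
    -- middle stays below f P₀
    have mid : ∀ d, r + 1 + d ≤ s - 1 → f (t.w k (r+1+d)) < f (t.w k (r-1)) := by
      intro d
      induction d with
      | zero => intro _; exact hQ0P0
      | succ d ih =>
        intro hd
        have hprev := ih (by omega)
        by_contra hle2
        push_neg at hle2
        have hlt : f (t.w k (r-1)) < f (t.w k (r+1+d+1)) :=
          lt_of_le_of_ne hle2 (fne hf (t.nes k (show r-1 ≠ r+1+d+1 by omega)
            (by omega) (by omega)))
        have hadj := fengP (t.w k (r+1+d)) (t.w k (r+1+d+1))
          (t.adjw k (by omega)) hprev hlt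
          (t.nes k (show r+1+d ≠ r by omega) (by omega) (by omega))
        exact t.na k (show r - 1 + 2 ≤ r+1+d by omega) (by omega) hadj.symm
    have hPlow := mid (s - 1 - (r+1)) (by omega)
    rw [show r + 1 + (s - 1 - (r+1)) = s - 1 by omega] at hPlow
    have hPM : G.Adj (t.w k (s-1)) (t.w k s) := by
      have := t.adjw k (show s - 1 < t.l k by omega)
      rwa [show s - 1 + 1 = s by omega] at this
    have hMP0 : f (t.w k (r-1)) < f (t.w k s) :=
      hM _ (t.nes k (show r-1 ≠ s by omega) (by omega) (by omega))
    have hadj := fengP (t.w k (s-1)) (t.w k s) hPM hPlow hMP0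
      (t.nes k (show s-1 ≠ r by omega) (by omega) (by omega))
    exact t.na k (show r - 1 + 2 ≤ s - 1 by omega) (by omega) hadj.symm
  -- b is above f Q₀
  have hbQ0 : f (t.w k (r+1)) < f t.b := by
    by_contra hle
    push_neg at hle
    have hb : f t.b < f (t.w k (r+1)) := by
      refine lt_of_le_of_ne hle (fne hf ?_)
      rw [← t.hwl k]
      exact t.nes k (show t.l k ≠ r+1 by omega) le_rfl (by omega)
    -- suffix descends below f Q₀ down to Q
    have suf : ∀ d, s + 1 ≤ t.l k - d → f (t.w k (t.l k - d)) < f (t.w k (r+1)) := by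
      intro d
      induction d with
      | zero => intro _; rw [Nat.sub_zero, t.hwl k]; exact hb
      | succ d ih =>
        intro hd
        have hprev := ih (by omega)
        by_contra hle2
        push_neg at hle2
        have hlt : f (t.w k (r+1)) < f (t.w k (t.l k - (d+1))) :=
          lt_of_le_of_ne hle2 (fne hf (t.nes k (show r+1 ≠ t.l k - (d+1) by omega)
            (by omega) (by omega)))
        have hedge : G.Adj (t.w k (t.l k - d)) (t.w k (t.l k - (d+1))) := by
          have := t.adjw k (show t.l k - (d+1) < t.l k by omega)
          rw [show t.l k - (d+1) + 1 = t.l k - d by omega] at this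
          exact this.symm
        have hadj := fengQ (t.w k (t.l k - d)) (t.w k (t.l k - (d+1))) hedge hprev hlt
          (t.nes k (show t.l k - d ≠ r by omega) (by omega) (by omega))
        exact t.na k (show r + 1 + 2 ≤ t.l k - d by omega) (by omega) hadj.symm
    have hQlow := suf (t.l k - (s+1)) (by omega)
    rw [show t.l k - (t.l k - (s+1)) = s + 1 by omega] at hQlow
    have hQM : G.Adj (t.w k (s+1)) (t.w k s) := (t.adjw k hsl).symm
    have hMQ0 : f (t.w k (r+1)) < f (t.w k s) :=
      hM _ (t.nes k (show r+1 ≠ s by omega) (by omega) (by omega))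
    have hadj := fengQ (t.w k (s+1)) (t.w k s) hQM hQlow hMQ0
      (t.nes k (show s+1 ≠ r by omega) (by omega) (by omega))
    exact t.na k (show r + 1 + 2 ≤ s + 1 by omega) (by omega) hadj.symm
  -- transfer to a via any other path
  obtain ⟨j, hjk⟩ : ∃ j : Fin 3, j ≠ k := by
    by_cases hk : k = 0
    · exact ⟨1, by rw [hk]; decide⟩
    · exact ⟨0, fun h => hk h.symm⟩
  have h4j := t.hl j
  have haQ0 : f (t.w k (r+1)) < f t.a := by
    have chainj : ∀ d, d ≤ t.l j → f (t.w k (r+1)) < f (t.w j (t.l j - d)) := by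
      intro d
      induction d with
      | zero => intro _; rw [Nat.sub_zero, t.hwl j]; exact hbQ0
      | succ d ih =>
        intro hd
        have hprev := ih (by omega)
        by_contra hle
        push_neg at hle
        have hvne : t.w j (t.l j - (d+1)) ≠ t.w k (r+1) :=
          Ne.symm (t.necr hjk.symm (show 0 < r+1 by omega) (by omega)
            (show t.l j - (d+1) ≤ t.l j by omega))
        have hlt : f (t.w j (t.l j - (d+1))) < f (t.w k (r+1)) :=
          lt_of_le_of_ne hle (fne hf hvne)
        have hedge : G.Adj (t.w j (t.l j - (d+1))) (t.w j (t.l j - d)) := by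
          have := t.adjw j (show t.l j - (d+1) < t.l j by omega)
          rwa [show t.l j - (d+1) + 1 = t.l j - d by omega] at this
        have hxm : t.w j (t.l j - (d+1)) ≠ t.w k r := by
          by_cases h0 : t.l j - (d+1) = 0
          · rw [h0, t.h0 j, ← t.h0 k]
            exact t.nes k (show (0:ℕ) ≠ r by omega) (by omega) (by omega)
          · exact t.necr hjk (by omega) (by omega) (by omega)
        have hadj := fengQ (t.w j (t.l j - (d+1))) (t.w j (t.l j - d)) hedge hlt hprev hxm
        by_cases h0 : t.l j - (d+1) = 0
        · rw [h0, t.h0 j, ← t.h0 k] at hadj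
          exact t.na k (show 0 + 2 ≤ r + 1 by omega) (by omega) hadj
        · exact t.nc hjk (by omega) (by omega) (by omega) (by omega) hadj
    have := chainj (t.l j) le_rfl
    rwa [show t.l j - t.l j = 0 by omega, t.h0 j] at this
  -- prefix stays above f Q₀, contradicting (*)
  have pre : ∀ d, d ≤ r - 1 → f (t.w k (r+1)) < f (t.w k d) := by
    intro d
    induction d with
    | zero => intro _; rw [t.h0 k]; exact haQ0
    | succ d ih =>
      intro hd
      have hprev := ih (by omega)
      by_contra hle
      push_neg at hle
      have hlt : f (t.w k (d+1)) < f (t.w k (r+1)) :=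
        lt_of_le_of_ne hle (fne hf (t.nes k (show d+1 ≠ r+1 by omega)
          (by omega) (by omega)))
      have hadj := fengQ (t.w k (d+1)) (t.w k d) (t.adjw k (by omega)).symm hlt hprev
        (t.nes k (show d+1 ≠ r by omega) (by omega) (by omega))
      exact t.na k (show d + 1 + 2 ≤ r + 1 by omega) (by omega) hadj
  have := pre (r-1) le_rfl
  linarith [hstar]

end KillsC

section Casc

variable {V : Type*} {G : SimpleGraph V} {f : V → ℝ}

open TD

/-- Upward cascade along a path: if the vertex at `s₀` lies strictly inside the
span of the edge `xy` and all vertices in `[s₀, s₁)` are non-adjacent to `x, y`,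
then all vertices in `[s₀, s₁]` lie strictly inside the span. -/
theorem cUp (t : TD V G) (hf : FourPointCond G f) (j : Fin 3) (x y : V)
    (hxy : G.Adj x y) (s₀ s₁ : ℕ) (hs₁ : s₁ ≤ t.l j)
    (hfar : ∀ q, s₀ ≤ q → q < s₁ → ¬G.Adj (t.w j q) x ∧ ¬G.Adj (t.w j q) y)
    (hbase : f x < f (t.w j s₀) ∧ f (t.w j s₀) < f y) :
    ∀ q, s₀ ≤ q → q ≤ s₁ → f x < f (t.w j q) ∧ f (t.w j q) < f y := by
  intro q
  induction q with
  | zero =>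
    intro hq0 _
    have h0 : s₀ = 0 := by omega
    exact h0 ▸ hbase
  | succ q ih =>
    intro hq hq1
    by_cases he : s₀ = q + 1
    · exact he ▸ hbase
    · have hprev := ih (by omega) (by omega)
      exact (trap hf hxy (hfar q (by omega) (by omega)).1
        (hfar q (by omega) (by omega)).2 hprev.1 hprev.2) _ (t.adjw j (by omega))

/-- Downward cascade along a path. -/
theorem cDown (t : TD V G) (hf : FourPointCond G f) (j : Fin 3) (x y : V)
    (hxy : G.Adj x y) (s₁ : ℕ) (hs₁ : s₁ ≤ t.l j)
    (hfar : ∀ q, 0 < q → q ≤ s₁ → ¬G.Adj (t.w j q) x ∧ ¬G.Adj (t.w j q) y)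
    (hbase : f x < f (t.w j s₁) ∧ f (t.w j s₁) < f y) :
    ∀ q, q ≤ s₁ → f x < f (t.w j q) ∧ f (t.w j q) < f y := by
  have key : ∀ e, e ≤ s₁ → f x < f (t.w j (s₁ - e)) ∧ f (t.w j (s₁ - e)) < f y := by
    intro e
    induction e with
    | zero => intro _; simpa using hbase
    | succ e ih =>
      intro he
      have hprev := ih (by omega)
      have hadj : G.Adj (t.w j (s₁ - e)) (t.w j (s₁ - (e+1))) := by
        have := t.adjw j (show s₁ - (e+1) < t.l j by omega)
        rw [show s₁ - (e+1) + 1 = s₁ - e by omega] at this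
        exact this.symm
      exact (trap hf hxy (hfar (s₁ - e) (by omega) (by omega)).1
        (hfar (s₁ - e) (by omega) (by omega)).2 hprev.1 hprev.2) _ hadj
  intro q hq
  have := key (s₁ - q) (by omega)
  rwa [show s₁ - (s₁ - q) = q by omega] at this

/-- If the span of an edge `xy` contains `a` strictly, and both ends are far
from the initial segment of the path holding the global minimum `m = w k r`,
then cascading from `a` up to `m` contradicts minimality. -/
theorem kkill (t : TD V G) (hf : FourPointCond G f) {k : Fin 3} {r : ℕ}
    (hr0 : 0 < r) (hrl : r + 1 ≤ t.l k)
    (hm : ∀ v, v ≠ t.w k r → f (t.w k r) < f v)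
    (x y : V) (hxy : G.Adj x y)
    (hfar : ∀ q, q ≤ r - 1 → ¬G.Adj (t.w k q) x ∧ ¬G.Adj (t.w k q) y)
    (hxm : x ≠ t.w k r) (h1 : f x < f t.a) (h2 : f t.a < f y) : False := by
  have hb0 : f x < f (t.w k 0) ∧ f (t.w k 0) < f y := by
    rw [t.h0 k]; exact ⟨h1, h2⟩
  have hbnd := cUp t hf k x y hxy 0 (r-1) (by omega)
    (fun q _ hq => hfar q (by omega)) hb0 (r-1) (by omega) le_rfl
  have hmadj : G.Adj (t.w k (r-1)) (t.w k r) := by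
    have := t.adjw k (show r-1 < t.l k by omega)
    rwa [show r-1+1 = r by omega] at this
  have h3 := ((trap hf hxy (hfar (r-1) le_rfl).1 (hfar (r-1) le_rfl).2
    hbnd.1 hbnd.2) _ hmadj).1
  have h4 := hm x hxm
  linarith

end Casc

section Boss

variable {V : Type*} {G : SimpleGraph V} {f : V → ℝ}

open TD

/-- Kill: min and max are adjacent interior vertices `w k r`, `w k (r+1)`,
with `2r+1 ≤ l k`. -/
theorem BOSSmain (t : TD V G) (hf : FourPointCond G f) {k : Fin 3} {r : ℕ}
    (hr0 : 0 < r) (hrl : r + 1 < t.l k) (h2r : 2*r + 1 ≤ t.l k)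
    (hm : ∀ v, v ≠ t.w k r → f (t.w k r) < f v)
    (hM : ∀ v, v ≠ t.w k (r+1) → f v < f (t.w k (r+1))) : False := by
  have h4 := t.hl k
  have hr3 : r + 3 ≤ t.l k := by omega
  -- engines
  have hmP : G.Adj (t.w k r) (t.w k (r-1)) := by
    have := t.adjw k (show r - 1 < t.l k by omega)
    rw [show r - 1 + 1 = r by omega] at this
    exact this.symm
  have hQM : G.Adj (t.w k (r+2)) (t.w k (r+1)) := (t.adjw k (by omega)).symm
  have feng : ∀ x v, G.Adj x v → f x < f (t.w k (r-1)) → f (t.w k (r-1)) < f v →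
      x ≠ t.w k r → G.Adj x (t.w k (r-1)) := by
    intro x v hadj h1 h2 hne
    exact hf.2 (t.w k r) x (t.w k (r-1)) v (hm x hne) h1 h2 hmP hadj
  have ceng : ∀ x v, G.Adj x v → f x < f (t.w k (r+2)) → f (t.w k (r+2)) < f v →
      v ≠ t.w k (r+1) → G.Adj (t.w k (r+2)) v := by
    intro x v hadj h1 h2 hne
    exact hf.2 x (t.w k (r+2)) v (t.w k (r+1)) h1 h2 (hM v hne) hadj hQM
  -- (1) α < β
  have hstar : f (t.w k (r-1)) < f (t.w k (r+2)) := by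
    by_contra hle
    push_neg at hle
    have hlt : f (t.w k (r+2)) < f (t.w k (r-1)) :=
      lt_of_le_of_ne hle (fne hf (t.nes k (show r+2 ≠ r-1 by omega) (by omega) (by omega)))
    have hMP : f (t.w k (r-1)) < f (t.w k (r+1)) :=
      hM _ (t.nes k (show r-1 ≠ r+1 by omega) (by omega) (by omega))
    have hadj := feng (t.w k (r+2)) (t.w k (r+1)) hQM hlt hMP
      (t.nes k (show r+2 ≠ r by omega) (by omega) (by omega))
    exact t.na k (show r - 1 + 2 ≤ r+2 by omega) (by omega) hadj.symm
  -- (2) prefix below β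
  have pre : ∀ d, d ≤ r - 1 → f (t.w k (r-1-d)) < f (t.w k (r+2)) := by
    intro d
    induction d with
    | zero => intro _; exact hstar
    | succ d ih =>
      intro hd
      have hprev := ih (by omega)
      by_contra hle
      push_neg at hle
      have hlt : f (t.w k (r+2)) < f (t.w k (r-1-(d+1))) :=
        lt_of_le_of_ne hle (fne hf (t.nes k (show r+2 ≠ r-1-(d+1) by omega)
          (by omega) (by omega)))
      have hedge : G.Adj (t.w k (r-1-d)) (t.w k (r-1-(d+1))) := by
        have := t.adjw k (show r-1-(d+1) < t.l k by omega)
        rw [show r-1-(d+1) + 1 = r-1-d by omega] at this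
        exact this.symm
      have hadj := ceng (t.w k (r-1-d)) (t.w k (r-1-(d+1))) hedge hprev hlt
        (t.nes k (show r-1-(d+1) ≠ r+1 by omega) (by omega) (by omega))
      exact t.na k (show r-1-(d+1) + 2 ≤ r+2 by omega) (by omega) hadj.symm
  have haβ : f t.a < f (t.w k (r+2)) := by
    have := pre (r-1) le_rfl
    rwa [show r-1-(r-1) = 0 by omega, t.h0 k] at this
  -- (3) the other paths, except b, lie below β
  have cβ : ∀ j, j ≠ k → ∀ i, i ≤ t.l j - 1 → f (t.w j i) < f (t.w k (r+2)) := by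
    intro j hjk i
    have h4j := t.hl j
    induction i with
    | zero => intro _; rw [t.h0 j]; exact haβ
    | succ i ih =>
      intro hi
      have hprev := ih (by omega)
      by_contra hle
      push_neg at hle
      have hlt : f (t.w k (r+2)) < f (t.w j (i+1)) :=
        lt_of_le_of_ne hle (fne hf (t.necr hjk.symm (show 0 < r+2 by omega)
          (by omega) (show i+1 ≤ t.l j by omega)))
      have hadj := ceng (t.w j i) (t.w j (i+1)) (t.adjw j (by omega)) hprev hlt
        (t.necr hjk.symm (show 0 < r+1 by omega) (by omega)
          (show i+1 ≤ t.l j by omega)).symm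
      exact t.nc hjk.symm (show 0 < r+2 by omega) (by omega) (show 0 < i+1 by omega)
        (by omega) hadj
  -- (5') suffix dominance
  have dom : ∀ d, r+2+d ≤ t.l k - 1 → ∀ j, j ≠ k → ∀ i, i ≤ t.l j - 1 →
      f (t.w j i) < f (t.w k (r+2+d)) := by
    intro d
    induction d with
    | zero => intro _ j hjk i hi; exact cβ j hjk i hi
    | succ d ih =>
      intro hd j hjk i hi
      have h4j := t.hl j
      by_contra hle
      push_neg at hle
      have hlt : f (t.w k (r+2+d+1)) < f (t.w j i) :=
        lt_of_le_of_ne hle (fne hf (t.necr hjk.symm (show 0 < r+2+d+1 by omega)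
          (by omega) (show i ≤ t.l j by omega)))
      have hup : f (t.w j i) < f (t.w k (r+2+d)) := ih (by omega) j hjk i hi
      have hedge : G.Adj (t.w k (r+2+d+1)) (t.w k (r+2+d)) := (t.adjw k (by omega)).symm
      -- cascade down path j to a
      have hfarj : ∀ q, 0 < q → q ≤ i →
          ¬G.Adj (t.w j q) (t.w k (r+2+d+1)) ∧ ¬G.Adj (t.w j q) (t.w k (r+2+d)) := by
        intro q hq0 hq
        exact ⟨t.nc hjk hq0 (by omega) (show 0 < r+2+d+1 by omega) (by omega),
               t.nc hjk hq0 (by omega) (show 0 < r+2+d by omega) (by omega)⟩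
      have habnd := cDown t hf j _ _ hedge i (by omega) hfarj ⟨hlt, hup⟩ 0 (by omega)
      rw [t.h0 j] at habnd
      refine kkill t hf hr0 (by omega) hm _ _ hedge ?_ ?_ habnd.1 habnd.2
      · intro q hq
        constructor
        · have := t.na k (show q + 2 ≤ r+2+d+1 by omega) (by omega)
          exact this
        · exact t.na k (show q + 2 ≤ r+2+d by omega) (by omega)
      · exact t.nes k (show r+2+d+1 ≠ r by omega) (by omega) (by omega)
  have hdom : ∀ j, j ≠ k → ∀ i, i ≤ t.l j - 1 →
      f (t.w j i) < f (t.w k (t.l k - 1)) := by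
    intro j hjk i hi
    have := dom (t.l k - 1 - (r+2)) (by omega) j hjk i hi
    rwa [show r+2+(t.l k - 1 - (r+2)) = t.l k - 1 by omega] at this
  have hnkb : G.Adj (t.w k (t.l k - 1)) t.b := by
    have := t.adjw k (show t.l k - 1 < t.l k by omega)
    rwa [show t.l k - 1 + 1 = t.l k by omega, t.hwl k] at this
  obtain ⟨j₁, j₂, hj12, hj1k, hj2k⟩ : ∃ j₁ j₂ : Fin 3, j₁ ≠ j₂ ∧ j₁ ≠ k ∧ j₂ ≠ k := by
    fin_cases k
    · exact ⟨1, 2, by decide, by decide, by decide⟩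
    · exact ⟨0, 2, by decide, by decide, by decide⟩
    · exact ⟨0, 1, by decide, by decide, by decide⟩
  have h41 := t.hl j₁; have h42 := t.hl j₂
  have hnjb : ∀ j : Fin 3, G.Adj (t.w j (t.l j - 1)) t.b := by
    intro j
    have h4j := t.hl j
    have := t.adjw j (show t.l j - 1 < t.l j by omega)
    rwa [show t.l j - 1 + 1 = t.l j by omega, t.hwl j] at this
  rcases lt_or_gt_of_ne (fne hf t.ne_ab) with hab | hba
  · -- CASE A : f a < f b
    have q2A : ∀ j, j ≠ k → ∀ i, i ≤ t.l j - 2 → f (t.w j i) < f t.b := by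
      intro j hjk i
      have h4j := t.hl j
      induction i with
      | zero => intro _; rw [t.h0 j]; exact hab
      | succ i ih =>
        intro hi
        have hprev := ih (by omega)
        by_contra hle
        push_neg at hle
        have hlt : f t.b < f (t.w j (i+1)) := by
          refine lt_of_le_of_ne hle (fne hf ?_)
          rw [← t.hwl j]
          exact t.nes j (show t.l j ≠ i+1 by omega) le_rfl (by omega)
        have hcap : f (t.w j (i+1)) < f (t.w k (t.l k - 1)) := hdom j hjk (i+1) (by omega)
        have hfired := hf.2 (t.w j i) t.b (t.w j (i+1)) (t.w k (t.l k - 1)) hprev hlt hcap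
          (t.adjw j (by omega)) hnkb.symm
        have hna := t.na j (show (i+1) + 2 ≤ t.l j by omega) le_rfl
        rw [t.hwl j] at hna
        exact hna hfired.symm
    have q1A : ∀ j, j ≠ k → f t.a < f (t.w j (t.l j - 1)) := by
      intro j hjk
      have h4j := t.hl j
      by_contra hle
      push_neg at hle
      have hlt : f (t.w j (t.l j - 1)) < f t.a := by
        refine lt_of_le_of_ne hle (fne hf ?_)
        rw [← t.h0 j]
        exact t.nes j (show t.l j - 1 ≠ 0 by omega) (by omega) (by omega)
      refine kkill t hf hr0 (by omega) hm _ _ (hnjb j) ?_ ?_ hlt hab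
      · intro q hq
        constructor
        · by_cases h0 : q = 0
          · rw [h0, t.h0 k, ← t.h0 j]
            exact t.na j (show 0 + 2 ≤ t.l j - 1 by omega) (by omega)
          · exact t.nc hjk.symm (by omega) (by omega) (by omega) (by omega)
        · have := t.na k (show q + 2 ≤ t.l k by omega) le_rfl
          rwa [t.hwl k] at this
      · exact t.necr hjk (by omega) (by omega) (by omega)
    -- tail kill
    have tailkill : ∀ jA jB : Fin 3, jA ≠ jB → jA ≠ k → jB ≠ k →
        f (t.w jA (t.l jA - 2)) < f (t.w jB (t.l jB - 1)) →
        f (t.w jB (t.l jB - 1)) < f (t.w jA (t.l jA - 1)) → False := by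
      intro jA jB hAB hAk hBk h1 h2
      have h4A := t.hl jA; have h4B := t.hl jB
      have hedge : G.Adj (t.w jA (t.l jA - 2)) (t.w jA (t.l jA - 1)) := by
        have := t.adjw jA (show t.l jA - 2 < t.l jA by omega)
        rwa [show t.l jA - 2 + 1 = t.l jA - 1 by omega] at this
      have hfarB : ∀ q, 0 < q → q ≤ t.l jB - 1 →
          ¬G.Adj (t.w jB q) (t.w jA (t.l jA - 2)) ∧
          ¬G.Adj (t.w jB q) (t.w jA (t.l jA - 1)) := by
        intro q hq0 hq
        exact ⟨t.nc hAB.symm hq0 (by omega) (by omega) (by omega),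
               t.nc hAB.symm hq0 (by omega) (by omega) (by omega)⟩
      have habnd := cDown t hf jB _ _ hedge (t.l jB - 1) (by omega) hfarB ⟨h1, h2⟩ 0 (by omega)
      rw [t.h0 jB] at habnd
      refine kkill t hf hr0 (by omega) hm _ _ hedge ?_ ?_ habnd.1 habnd.2
      · intro q hq
        by_cases h0 : q = 0
        · rw [h0, t.h0 k, ← t.h0 jA]
          exact ⟨t.na jA (show 0 + 2 ≤ t.l jA - 2 by omega) (by omega),
                 t.na jA (show 0 + 2 ≤ t.l jA - 1 by omega) (by omega)⟩
        · exact ⟨t.nc hAk.symm (by omega) (by omega) (by omega) (by omega),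
                 t.nc hAk.symm (by omega) (by omega) (by omega) (by omega)⟩
      · exact t.necr hAk (by omega) (by omega) (by omega)
    -- ladder
    have ladder : ∀ jA jB : Fin 3, jA ≠ jB → jA ≠ k → jB ≠ k → ∀ iM, iM ≤ t.l jA - 1 →
        (∀ i, 0 < i → i ≤ iM → f (t.w jA i) < f t.b) →
        ∀ i, i ≤ iM → f (t.w jA i) < f (t.w jB (t.l jB - 1)) := by
      intro jA jB hAB hAk hBk iM hiM hcap i
      have h4A := t.hl jA; have h4B := t.hl jB
      induction i with
      | zero => intro _; rw [t.h0 jA]; exact q1A jB hBk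
      | succ i ih =>
        intro hi
        have hprev := ih (by omega)
        by_contra hle
        push_neg at hle
        have hlt : f (t.w jB (t.l jB - 1)) < f (t.w jA (i+1)) :=
          lt_of_le_of_ne hle (fne hf (t.necr hAB.symm (show 0 < t.l jB - 1 by omega)
            (show t.l jB - 1 < t.l jB by omega) (show i+1 ≤ t.l jA by omega)))
        have hfired := hf.2 (t.w jA i) (t.w jB (t.l jB - 1)) (t.w jA (i+1)) t.b
          hprev hlt (hcap (i+1) (by omega) hi) (t.adjw jA (by omega)) (hnjb jB)
        exact t.nc hAB.symm (by omega) (by omega) (by omega) (by omega) hfired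
    have hv1 : f (t.w j₁ (t.l j₁ - 1)) ≠ f t.b := by
      refine fne hf ?_
      rw [← t.hwl j₁]
      exact t.nes j₁ (show t.l j₁ - 1 ≠ t.l j₁ by omega) (by omega) le_rfl
    have hv2 : f (t.w j₂ (t.l j₂ - 1)) ≠ f t.b := by
      refine fne hf ?_
      rw [← t.hwl j₂]
      exact t.nes j₂ (show t.l j₂ - 1 ≠ t.l j₂ by omega) (by omega) le_rfl
    rcases lt_or_gt_of_ne hv1 with hb1 | hb1 <;> rcases lt_or_gt_of_ne hv2 with hb2 | hb2
    · -- both low : full ladders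
      have cap1 : ∀ i, 0 < i → i ≤ t.l j₁ - 1 → f (t.w j₁ i) < f t.b := by
        intro i hi0 hi
        by_cases hend : i = t.l j₁ - 1
        · rw [hend]; exact hb1
        · exact q2A j₁ hj1k i (by omega)
      have cap2 : ∀ i, 0 < i → i ≤ t.l j₂ - 1 → f (t.w j₂ i) < f t.b := by
        intro i hi0 hi
        by_cases hend : i = t.l j₂ - 1
        · rw [hend]; exact hb2
        · exact q2A j₂ hj2k i (by omega)
      have l12 := ladder j₁ j₂ hj12 hj1k hj2k (t.l j₁ - 1) le_rfl cap1 (t.l j₁ - 1) le_rfl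
      have l21 := ladder j₂ j₁ hj12.symm hj2k hj1k (t.l j₂ - 1) le_rfl cap2 (t.l j₂ - 1) le_rfl
      linarith
    · -- j₁ low, j₂ high
      have plad := ladder j₂ j₁ hj12.symm hj2k hj1k (t.l j₂ - 2) (by omega)
        (fun i hi0 hi => q2A j₂ hj2k i hi) (t.l j₂ - 2) le_rfl
      exact tailkill j₂ j₁ hj12.symm hj2k hj1k plad (by linarith)
    · -- j₂ low, j₁ high
      have plad := ladder j₁ j₂ hj12 hj1k hj2k (t.l j₁ - 2) (by omega)
        (fun i hi0 hi => q2A j₁ hj1k i hi) (t.l j₁ - 2) le_rfl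
      exact tailkill j₁ j₂ hj12 hj1k hj2k plad (by linarith)
    · -- both high
      have hvv : f (t.w j₁ (t.l j₁ - 1)) ≠ f (t.w j₂ (t.l j₂ - 1)) :=
        fne hf (t.necr hj12 (by omega) (by omega) (by omega))
      rcases lt_or_gt_of_ne hvv with h12 | h12
      · refine tailkill j₂ j₁ hj12.symm hj2k hj1k ?_ h12
        have := q2A j₂ hj2k (t.l j₂ - 2) le_rfl
        linarith
      · refine tailkill j₁ j₂ hj12 hj1k hj2k ?_ h12
        have := q2A j₁ hj1k (t.l j₁ - 2) le_rfl
        linarith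
  · -- CASE B : f b < f a
    have q1B : ∀ j, j ≠ k → f t.b < f (t.w j 1) := by
      intro j hjk
      have h4j := t.hl j
      by_contra hle
      push_neg at hle
      have hlt : f (t.w j 1) < f t.b := by
        refine lt_of_le_of_ne hle (fne hf ?_)
        rw [← t.hwl j]
        exact t.nes j (show (1:ℕ) ≠ t.l j by omega) (by omega) le_rfl
      have hedge : G.Adj (t.w j 1) t.a := by
        have := t.adjw j (show 0 < t.l j by omega)
        rw [t.h0 j] at this
        exact this.symm
      have hbc : ¬ G.Adj t.b (t.w j 1) := by
        have := t.na j (show 1 + 2 ≤ t.l j by omega) le_rfl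
        rw [t.hwl j] at this
        exact fun h => this h.symm
      have hbna : ¬ G.Adj t.b t.a := fun h => t.not_adj_ab h.symm
      have htr := trap hf hedge hbc hbna hlt hba
      have hnk := (htr _ hnkb.symm).2
      have := hdom j hjk 0 (by omega)
      rw [t.h0 j] at this
      linarith
    have q2B : ∀ j, j ≠ k → ∀ i, 2 ≤ i → i ≤ t.l j - 1 → f (t.w j i) < f t.a := by
      intro j hjk
      have h4j := t.hl j
      have key : ∀ e, e ≤ t.l j - 3 → f (t.w j (t.l j - 1 - e)) < f t.a := by
        intro e
        induction e with
        | zero =>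
          intro _
          rw [Nat.sub_zero]
          by_contra hle
          push_neg at hle
          have hgt : f t.a < f (t.w j (t.l j - 1)) := by
            refine lt_of_le_of_ne hle (fne hf ?_)
            rw [← t.h0 j]
            exact t.nes j (show (0:ℕ) ≠ t.l j - 1 by omega) (by omega) (by omega)
          refine kkill t hf hr0 (by omega) hm t.b (t.w j (t.l j - 1)) (hnjb j).symm
            ?_ ?_ hba hgt
          · intro q hq
            constructor
            · have := t.na k (show q + 2 ≤ t.l k by omega) le_rfl
              rw [t.hwl k] at this
              exact this
            · by_cases h0 : q = 0
              · rw [h0, t.h0 k, ← t.h0 j]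
                exact t.na j (show 0 + 2 ≤ t.l j - 1 by omega) (by omega)
              · exact t.nc hjk.symm (by omega) (by omega) (by omega) (by omega)
          · rw [← t.hwl k]
            exact t.nes k (show t.l k ≠ r by omega) le_rfl (by omega)
        | succ e ih =>
          intro he
          have hprev := ih (by omega)
          by_contra hle
          push_neg at hle
          have hgt : f t.a < f (t.w j (t.l j - 1 - (e+1))) := by
            refine lt_of_le_of_ne hle (fne hf ?_)
            rw [← t.h0 j]
            exact t.nes j (show (0:ℕ) ≠ t.l j - 1 - (e+1) by omega) (by omega) (by omega)
          have hedge : G.Adj (t.w j (t.l j - 1 - e)) (t.w j (t.l j - 1 - (e+1))) := by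
            have := t.adjw j (show t.l j - 1 - (e+1) < t.l j by omega)
            rw [show t.l j - 1 - (e+1) + 1 = t.l j - 1 - e by omega] at this
            exact this.symm
          refine kkill t hf hr0 (by omega) hm _ _ hedge ?_ ?_ hprev hgt
          · intro q hq
            constructor
            · by_cases h0 : q = 0
              · rw [h0, t.h0 k, ← t.h0 j]
                exact t.na j (show 0 + 2 ≤ t.l j - 1 - e by omega) (by omega)
              · exact t.nc hjk.symm (by omega) (by omega) (by omega) (by omega)
            · by_cases h0 : q = 0
              · rw [h0, t.h0 k, ← t.h0 j]
                exact t.na j (show 0 + 2 ≤ t.l j - 1 - (e+1) by omega) (by omega)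
              · exact t.nc hjk.symm (by omega) (by omega) (by omega) (by omega)
          · exact t.necr hjk (by omega) (by omega) (by omega)
      intro i hi2 hi
      have := key (t.l j - 1 - i) (by omega)
      rwa [show t.l j - 1 - (t.l j - 1 - i) = i by omega] at this
    -- head kill
    have headkill : ∀ jA jB : Fin 3, jA ≠ jB → jA ≠ k → jB ≠ k →
        f (t.w jA 2) < f (t.w jB 1) → f (t.w jB 1) < f (t.w jA 1) → False := by
      intro jA jB hAB hAk hBk h1 h2
      have h4A := t.hl jA; have h4B := t.hl jB
      have hedge : G.Adj (t.w jA 2) (t.w jA 1) := (t.adjw jA (by omega)).symm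
      have hfarB : ∀ q, 1 ≤ q → q < t.l jB →
          ¬G.Adj (t.w jB q) (t.w jA 2) ∧ ¬G.Adj (t.w jB q) (t.w jA 1) := by
        intro q hq0 hq
        exact ⟨t.nc hAB.symm hq0 hq (by omega) (by omega),
               t.nc hAB.symm hq0 hq (by omega) (by omega)⟩
      have hbnd := cUp t hf jB _ _ hedge 1 (t.l jB) le_rfl hfarB ⟨h1, h2⟩
        (t.l jB) (by omega) le_rfl
      rw [t.hwl jB] at hbnd
      have hb2 : ¬ G.Adj t.b (t.w jA 2) := by
        have := t.na jA (show 2 + 2 ≤ t.l jA by omega) le_rfl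
        rw [t.hwl jA] at this
        exact fun h => this h.symm
      have hb1 : ¬ G.Adj t.b (t.w jA 1) := by
        have := t.na jA (show 1 + 2 ≤ t.l jA by omega) le_rfl
        rw [t.hwl jA] at this
        exact fun h => this h.symm
      have hnk := (trap hf hedge hb2 hb1 hbnd.1 hbnd.2 _ hnkb.symm).2
      have := hdom jA hAk 1 (by omega)
      linarith
    -- descending ladder
    have ladderB : ∀ jA jB : Fin 3, jA ≠ jB → jA ≠ k → jB ≠ k → ∀ iMin, 1 ≤ iMin →
        (∀ i, iMin ≤ i → i ≤ t.l jA - 1 → f (t.w jA i) < f t.a) →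
        ∀ e, e ≤ t.l jA - iMin → f (t.w jA (t.l jA - e)) < f (t.w jB 1) := by
      intro jA jB hAB hAk hBk iMin hiMin hcap e
      have h4A := t.hl jA; have h4B := t.hl jB
      induction e with
      | zero =>
        intro _
        rw [Nat.sub_zero, t.hwl jA]
        exact q1B jB hBk
      | succ e ih =>
        intro he
        have hprev := ih (by omega)
        by_contra hle
        push_neg at hle
        have hlt : f (t.w jB 1) < f (t.w jA (t.l jA - (e+1))) :=
          lt_of_le_of_ne hle (fne hf (t.necr hAB.symm (show (0:ℕ) < 1 by omega)
            (show 1 < t.l jB by omega) (show t.l jA - (e+1) ≤ t.l jA by omega)))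
        have hedge : G.Adj (t.w jA (t.l jA - e)) (t.w jA (t.l jA - (e+1))) := by
          have := t.adjw jA (show t.l jA - (e+1) < t.l jA by omega)
          rw [show t.l jA - (e+1) + 1 = t.l jA - e by omega] at this
          exact this.symm
        have hca : G.Adj (t.w jB 1) t.a := by
          have := t.adjw jB (show 0 < t.l jB by omega)
          rw [t.h0 jB] at this
          exact this.symm
        have hfired := hf.2 (t.w jA (t.l jA - e)) (t.w jB 1) (t.w jA (t.l jA - (e+1))) t.a
          hprev hlt (hcap _ (by omega) (by omega)) hedge hca
        exact t.nc hAB.symm (by omega) (by omega) (by omega) (by omega) hfired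
    have hv1 : f (t.w j₁ 1) ≠ f t.a := by
      refine fne hf ?_
      rw [← t.h0 j₁]
      exact t.nes j₁ (show (1:ℕ) ≠ 0 by omega) (by omega) (by omega)
    have hv2 : f (t.w j₂ 1) ≠ f t.a := by
      refine fne hf ?_
      rw [← t.h0 j₂]
      exact t.nes j₂ (show (1:ℕ) ≠ 0 by omega) (by omega) (by omega)
    rcases lt_or_gt_of_ne hv1 with hc1 | hc1 <;> rcases lt_or_gt_of_ne hv2 with hc2 | hc2
    · -- both low : full descending ladders
      have cap1 : ∀ i, 1 ≤ i → i ≤ t.l j₁ - 1 → f (t.w j₁ i) < f t.a := by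
        intro i hi0 hi
        by_cases h1 : i = 1
        · rw [h1]; exact hc1
        · exact q2B j₁ hj1k i (by omega) hi
      have cap2 : ∀ i, 1 ≤ i → i ≤ t.l j₂ - 1 → f (t.w j₂ i) < f t.a := by
        intro i hi0 hi
        by_cases h1 : i = 1
        · rw [h1]; exact hc2
        · exact q2B j₂ hj2k i (by omega) hi
      have l12 := ladderB j₁ j₂ hj12 hj1k hj2k 1 le_rfl cap1 (t.l j₁ - 1) le_rfl
      have l21 := ladderB j₂ j₁ hj12.symm hj2k hj1k 1 le_rfl cap2 (t.l j₂ - 1) le_rfl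
      rw [show t.l j₁ - (t.l j₁ - 1) = 1 by omega] at l12
      rw [show t.l j₂ - (t.l j₂ - 1) = 1 by omega] at l21
      linarith
    · -- j₁ low, j₂ high
      have plad := ladderB j₂ j₁ hj12.symm hj2k hj1k 2 (by omega)
        (fun i hi0 hi => q2B j₂ hj2k i hi0 hi) (t.l j₂ - 2) (by omega)
      rw [show t.l j₂ - (t.l j₂ - 2) = 2 by omega] at plad
      exact headkill j₂ j₁ hj12.symm hj2k hj1k plad (by linarith)
    · -- j₂ low, j₁ high
      have plad := ladderB j₁ j₂ hj12 hj1k hj2k 2 (by omega)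
        (fun i hi0 hi => q2B j₁ hj1k i hi0 hi) (t.l j₁ - 2) (by omega)
      rw [show t.l j₁ - (t.l j₁ - 2) = 2 by omega] at plad
      exact headkill j₁ j₂ hj12 hj1k hj2k plad (by linarith)
    · -- both high
      have hvv : f (t.w j₁ 1) ≠ f (t.w j₂ 1) :=
        fne hf (t.necr hj12 (by omega) (by omega) (by omega))
      rcases lt_or_gt_of_ne hvv with h12 | h12
      · refine headkill j₂ j₁ hj12.symm hj2k hj1k ?_ h12
        have := q2B j₂ hj2k 2 le_rfl (by omega)
        linarith
      · refine headkill j₁ j₂ hj12 hj1k hj2k ?_ h12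
        have := q2B j₁ hj1k 2 le_rfl (by omega)
        linarith

end Boss

section Core

variable {V : Type*} {G : SimpleGraph V} {f : V → ℝ}

open TD

/-- Boss wrapper: handles the `2r+1 ≤ l` normalisation by path reversal. -/
theorem BOSSwrap (t : TD V G) (hf : FourPointCond G f) {k : Fin 3} {r : ℕ}
    (hr0 : 0 < r) (hrl : r + 1 < t.l k)
    (hm : ∀ v, v ≠ t.w k r → f (t.w k r) < f v)
    (hM : ∀ v, v ≠ t.w k (r+1) → f v < f (t.w k (r+1))) : False := by
  by_cases h2r : 2*r + 1 ≤ t.l k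
  · exact BOSSmain t hf hr0 hrl h2r hm hM
  · have e1 : t.rev.w k (t.l k - r - 1) = t.w k (r+1) := by
      show t.w k (t.l k - (t.l k - r - 1)) = t.w k (r+1)
      congr 1
      omega
    have e2 : t.rev.w k (t.l k - r - 1 + 1) = t.w k r := by
      show t.w k (t.l k - (t.l k - r - 1 + 1)) = t.w k r
      congr 1
      omega
    refine BOSSmain t.rev (fpc_neg hf) (k := k) (r := t.l k - r - 1)
      (by show 0 < t.l k - r - 1; omega)
      (by show t.l k - r - 1 + 1 < t.l k; omega)
      (by show 2*(t.l k - r - 1) + 1 ≤ t.l k; omega) ?_ ?_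
    · intro v hv
      rw [e1] at hv ⊢
      simpa using hM v hv
    · intro v hv
      rw [e2] at hv ⊢
      simpa using hm v hv

/-- The combinatorial core: a theta graph admits no four-point order. -/
theorem core (t : TD V G) (hf : FourPointCond G f) (hab : f t.a < f t.b) : False := by
  have : Finite V := t.finiteV
  have : Nonempty V := ⟨t.a⟩
  obtain ⟨m, hm0⟩ := Finite.exists_min f
  obtain ⟨M, hM0⟩ := Finite.exists_max f
  have hm : ∀ v, v ≠ m → f m < f v :=
    fun v hv => lt_of_le_of_ne (hm0 v) (fne hf hv.symm)
  have hM : ∀ v, v ≠ M → f v < f M :=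
    fun v hv => lt_of_le_of_ne (hM0 v) (fne hf hv)
  obtain ⟨km, rm, hrm, hwm⟩ := t.cover m
  obtain ⟨kM, rM, hrM, hwM⟩ := t.cover M
  have h4m := t.hl km; have h4M := t.hl kM
  -- m is not a
  rcases Nat.eq_zero_or_pos rm with hm0' | hrm0
  · -- m = a : apply K1 to reversed paths with negated order
    have hma : m = t.a := by rw [← hwm, hm0', t.h0 km]
    refine K1 t.rev (fpc_neg hf) ?_ ?_
    · show -(f t.b) < -(f t.a)
      simpa using hab
    · intro v hv
      show -(f v) < -(f t.a)
      have hva : v ≠ t.a := hv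
      have hvm : v ≠ m := by rw [hma]; exact hva
      have := hm v hvm
      rw [hma] at this
      simpa using this
  rcases eq_or_lt_of_le hrm with hm1' | hrml
  · -- m = b : contradiction with f a < f b
    have hmb : m = t.b := by rw [← hwm, hm1', t.hwl km]
    have := hm t.a (by rw [hmb]; exact t.ne_ab)
    rw [hmb] at this
    linarith
  -- M is not a or b
  rcases Nat.eq_zero_or_pos rM with hM0' | hrM0
  · have hMa : M = t.a := by rw [← hwM, hM0', t.h0 kM]
    have := hM t.b (by rw [hMa]; exact t.ne_ab.symm)
    rw [hMa] at this
    linarith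
  rcases eq_or_lt_of_le hrM with hM1' | hrMl
  · -- M = b : K1 directly
    have hMb : M = t.b := by rw [← hwM, hM1', t.hwl kM]
    exact K1 t hf hab (fun v hv => by rw [← hMb] at hv ⊢; exact hM v hv)
  -- both interior
  have hmM : m ≠ M := by
    intro h
    have h1 := hm0 t.a
    have h2 := hM0 t.b
    rw [h] at h1
    linarith
  subst hwm
  subst hwM
  by_cases hkk : km = kM
  · subst hkk
    have hne : rm ≠ rM := fun h => hmM (by rw [h])
    rcases lt_or_gt_of_ne hne with hlt | hlt
    · by_cases hadj : rM = rm + 1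
      · subst hadj
        exact BOSSwrap t hf (k := km) (r := rm) hrm0 (by omega) hm hM
      · exact K3 t hf (k := km) (r := rm) (s := rM) hrm0 (by omega) hrMl hm hM
    · -- reversed orientation: negate f
      by_cases hadj : rm = rM + 1
      · subst hadj
        refine BOSSwrap t (fpc_neg hf) (k := km) (r := rM) hrM0 (by omega) ?_ ?_
        · intro v hv
          show -(f (t.w km rM)) < -(f v)
          simpa using hM v hv
        · intro v hv
          show -(f v) < -(f (t.w km (rM+1)))
          simpa using hm v hv
      · refine K3 t (fpc_neg hf) (k := km) (r := rM) (s := rm) hrM0 (by omega) hrml ?_ ?_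
        · intro v hv
          show -(f (t.w km rM)) < -(f v)
          simpa using hM v hv
        · intro v hv
          show -(f v) < -(f (t.w km rm))
          simpa using hm v hv
  · exact K2 t hf hkk hrm0 hrml hrM0 hrMl hm hM

end Core

namespace TD

/-- Package three explicit paths into a `TD`. -/
def mk3 {V : Type*} {G : SimpleGraph V} (w0 w1 w2 : ℕ → V) (l0 l1 l2 : ℕ) (a b : V)
    (hl0 : 4 ≤ l0) (hl1 : 4 ≤ l1) (hl2 : 4 ≤ l2)
    (h00 : w0 0 = a) (h10 : w1 0 = a) (h20 : w2 0 = a)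
    (h0l : w0 l0 = b) (h1l : w1 l1 = b) (h2l : w2 l2 = b)
    (inj0 : ∀ ⦃i j : ℕ⦄, i ≤ l0 → j ≤ l0 → w0 i = w0 j → i = j)
    (inj1 : ∀ ⦃i j : ℕ⦄, i ≤ l1 → j ≤ l1 → w1 i = w1 j → i = j)
    (inj2 : ∀ ⦃i j : ℕ⦄, i ≤ l2 → j ≤ l2 → w2 i = w2 j → i = j)
    (cr01 : ∀ ⦃i j : ℕ⦄, i ≤ l0 → j ≤ l1 → w0 i = w1 j → (i = 0 ∧ j = 0) ∨ (i = l0 ∧ j = l1))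
    (cr02 : ∀ ⦃i j : ℕ⦄, i ≤ l0 → j ≤ l2 → w0 i = w2 j → (i = 0 ∧ j = 0) ∨ (i = l0 ∧ j = l2))
    (cr12 : ∀ ⦃i j : ℕ⦄, i ≤ l1 → j ≤ l2 → w1 i = w2 j → (i = 0 ∧ j = 0) ∨ (i = l1 ∧ j = l2))
    (hadj : ∀ u v, G.Adj u v ↔
      (∃ i, i < l0 ∧ ((w0 i = u ∧ w0 (i+1) = v) ∨ (w0 i = v ∧ w0 (i+1) = u))) ∨
      (∃ i, i < l1 ∧ ((w1 i = u ∧ w1 (i+1) = v) ∨ (w1 i = v ∧ w1 (i+1) = u))) ∨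
      (∃ i, i < l2 ∧ ((w2 i = u ∧ w2 (i+1) = v) ∨ (w2 i = v ∧ w2 (i+1) = u))))
    (hcov : ∀ v, (∃ i, i ≤ l0 ∧ w0 i = v) ∨ (∃ i, i ≤ l1 ∧ w1 i = v) ∨
      (∃ i, i ≤ l2 ∧ w2 i = v)) :
    TD V G where
  w := fun k => if k.val = 0 then w0 else if k.val = 1 then w1 else w2
  l := fun k => if k.val = 0 then l0 else if k.val = 1 then l1 else l2
  a := a
  b := b
  hl := by
    rintro ⟨kv, hkv⟩
    interval_cases kv <;> simp [hl0, hl1, hl2]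
  h0 := by
    rintro ⟨kv, hkv⟩
    interval_cases kv <;> simp [h00, h10, h20]
  hwl := by
    rintro ⟨kv, hkv⟩
    interval_cases kv <;> simp [h0l, h1l, h2l]
  inj := by
    rintro ⟨kv, hkv⟩ i j hi hj he
    interval_cases kv <;> simp only at hi hj he <;>
      [exact inj0 (by simpa using hi) (by simpa using hj) (by simpa using he);
       exact inj1 (by simpa using hi) (by simpa using hj) (by simpa using he);
       exact inj2 (by simpa using hi) (by simpa using hj) (by simpa using he)]
  cross := by
    rintro ⟨kv, hkv⟩ ⟨kv', hkv'⟩ hkk i j hi hj he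
    have hne : kv ≠ kv' := fun h => hkk (Fin.ext h)
    interval_cases kv <;> interval_cases kv'
    · exact absurd rfl hne
    · exact cr01 hi hj he
    · exact cr02 hi hj he
    · rcases cr01 hj hi he.symm with ⟨e1, e2⟩ | ⟨e1, e2⟩
      · exact Or.inl ⟨e2, e1⟩
      · exact Or.inr ⟨e2, e1⟩
    · exact absurd rfl hne
    · exact cr12 hi hj he
    · rcases cr02 hj hi he.symm with ⟨e1, e2⟩ | ⟨e1, e2⟩
      · exact Or.inl ⟨e2, e1⟩
      · exact Or.inr ⟨e2, e1⟩
    · rcases cr12 hj hi he.symm with ⟨e1, e2⟩ | ⟨e1, e2⟩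
      · exact Or.inl ⟨e2, e1⟩
      · exact Or.inr ⟨e2, e1⟩
    · exact absurd rfl hne
  adj := by
    intro u v
    rw [hadj u v]
    constructor
    · rintro (⟨i, hi, H⟩ | ⟨i, hi, H⟩ | ⟨i, hi, H⟩)
      · exact ⟨⟨0, by omega⟩, i, by simpa using hi, by simpa using H⟩
      · exact ⟨⟨1, by omega⟩, i, by simpa using hi, by simpa using H⟩
      · exact ⟨⟨2, by omega⟩, i, by simpa using hi, by simpa using H⟩
    · rintro ⟨⟨kv, hkv⟩, i, hi, H⟩
      interval_cases kv <;> simp only at hi H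
      · exact Or.inl ⟨i, by simpa using hi, by simpa using H⟩
      · exact Or.inr (Or.inl ⟨i, by simpa using hi, by simpa using H⟩)
      · exact Or.inr (Or.inr ⟨i, by simpa using hi, by simpa using H⟩)
  cover := by
    intro v
    rcases hcov v with ⟨i, hi, hv⟩ | ⟨i, hi, hv⟩ | ⟨i, hi, hv⟩
    · exact ⟨⟨0, by omega⟩, i, by simpa using hi, by simpa using hv⟩
    · exact ⟨⟨1, by omega⟩, i, by simpa using hi, by simpa using hv⟩
    · exact ⟨⟨2, by omega⟩, i, by simpa using hi, by simpa using hv⟩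

end TD

/-- For all path lengths `4 ≤ lx ≤ ly ≤ lz`, the theta graph `H^{lx, ly, lz}`
does not belong to `AND(1)`. -/
theorem theta_not_mem_and1 {V : Type*} (G : SimpleGraph V) (lx ly lz : ℕ)
    (hx : 4 ≤ lx) (hxy : lx ≤ ly) (hyz : ly ≤ lz)
    (h : IsThetaGraph G lx ly lz) : ¬ InAND1 G := by
  intro hand
  obtain ⟨X, Y, Z, hXi, hYi, hZi, hXY0, hYZ0, hXYl, hYZl, cXY, cXZ, cYZ, hcov, hadj⟩ := h
  have hly : 4 ≤ ly := le_trans hx hxy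
  have hlz : 4 ≤ lz := le_trans hly hyz
  have eX : ∀ (i : ℕ) (hi : i ≤ lx),
      X ⟨min i lx, Nat.lt_succ_of_le (min_le_right _ _)⟩ = X ⟨i, Nat.lt_succ_of_le hi⟩ := by
    intro i hi
    congr 1
    exact Fin.ext (by simp [min_eq_left hi])
  have eY : ∀ (i : ℕ) (hi : i ≤ ly),
      Y ⟨min i ly, Nat.lt_succ_of_le (min_le_right _ _)⟩ = Y ⟨i, Nat.lt_succ_of_le hi⟩ := by
    intro i hi
    congr 1
    exact Fin.ext (by simp [min_eq_left hi])
  have eZ : ∀ (i : ℕ) (hi : i ≤ lz),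
      Z ⟨min i lz, Nat.lt_succ_of_le (min_le_right _ _)⟩ = Z ⟨i, Nat.lt_succ_of_le hi⟩ := by
    intro i hi
    congr 1
    exact Fin.ext (by simp [min_eq_left hi])
  have castX : ∀ i : Fin lx,
      X ⟨min i.val lx, Nat.lt_succ_of_le (min_le_right _ _)⟩ = X i.castSucc :=
    fun i => congrArg X (Fin.ext (by rw [Fin.coe_castSucc]; exact min_eq_left i.isLt.le))
  have succX : ∀ i : Fin lx,
      X ⟨min (i.val + 1) lx, Nat.lt_succ_of_le (min_le_right _ _)⟩ = X i.succ :=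
    fun i => congrArg X (Fin.ext (by rw [Fin.val_succ]; exact min_eq_left i.isLt))
  have castY : ∀ i : Fin ly,
      Y ⟨min i.val ly, Nat.lt_succ_of_le (min_le_right _ _)⟩ = Y i.castSucc :=
    fun i => congrArg Y (Fin.ext (by rw [Fin.coe_castSucc]; exact min_eq_left i.isLt.le))
  have succY : ∀ i : Fin ly,
      Y ⟨min (i.val + 1) ly, Nat.lt_succ_of_le (min_le_right _ _)⟩ = Y i.succ :=
    fun i => congrArg Y (Fin.ext (by rw [Fin.val_succ]; exact min_eq_left i.isLt))
  have castZ : ∀ i : Fin lz,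
      Z ⟨min i.val lz, Nat.lt_succ_of_le (min_le_right _ _)⟩ = Z i.castSucc :=
    fun i => congrArg Z (Fin.ext (by rw [Fin.coe_castSucc]; exact min_eq_left i.isLt.le))
  have succZ : ∀ i : Fin lz,
      Z ⟨min (i.val + 1) lz, Nat.lt_succ_of_le (min_le_right _ _)⟩ = Z i.succ :=
    fun i => congrArg Z (Fin.ext (by rw [Fin.val_succ]; exact min_eq_left i.isLt))
  -- unbundled hypotheses
  have h00' : X ⟨min 0 lx, Nat.lt_succ_of_le (min_le_right _ _)⟩ = X 0 :=
    congrArg X (Fin.ext (by simp))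
  have h10' : Y ⟨min 0 ly, Nat.lt_succ_of_le (min_le_right _ _)⟩ = X 0 :=
    (congrArg Y (Fin.ext (by simp))).trans hXY0.symm
  have h20' : Z ⟨min 0 lz, Nat.lt_succ_of_le (min_le_right _ _)⟩ = X 0 :=
    (congrArg Z (Fin.ext (by simp))).trans (hXY0.trans hYZ0).symm
  have h0l' : X ⟨min lx lx, Nat.lt_succ_of_le (min_le_right _ _)⟩ = X (Fin.last lx) :=
    congrArg X (Fin.ext (by simp [Fin.last]))
  have h1l' : Y ⟨min ly ly, Nat.lt_succ_of_le (min_le_right _ _)⟩ = X (Fin.last lx) :=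
    (congrArg Y (Fin.ext (by simp [Fin.last]))).trans hXYl.symm
  have h2l' : Z ⟨min lz lz, Nat.lt_succ_of_le (min_le_right _ _)⟩ = X (Fin.last lx) :=
    (congrArg Z (Fin.ext (by simp [Fin.last]))).trans (hXYl.trans hYZl).symm
  have inj0' : ∀ ⦃i j : ℕ⦄, i ≤ lx → j ≤ lx →
      X ⟨min i lx, Nat.lt_succ_of_le (min_le_right _ _)⟩ =
      X ⟨min j lx, Nat.lt_succ_of_le (min_le_right _ _)⟩ → i = j := by
    intro i j hi hj he
    rw [eX i hi, eX j hj] at he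
    exact congrArg Fin.val (hXi he)
  have inj1' : ∀ ⦃i j : ℕ⦄, i ≤ ly → j ≤ ly →
      Y ⟨min i ly, Nat.lt_succ_of_le (min_le_right _ _)⟩ =
      Y ⟨min j ly, Nat.lt_succ_of_le (min_le_right _ _)⟩ → i = j := by
    intro i j hi hj he
    rw [eY i hi, eY j hj] at he
    exact congrArg Fin.val (hYi he)
  have inj2' : ∀ ⦃i j : ℕ⦄, i ≤ lz → j ≤ lz →
      Z ⟨min i lz, Nat.lt_succ_of_le (min_le_right _ _)⟩ =
      Z ⟨min j lz, Nat.lt_succ_of_le (min_le_right _ _)⟩ → i = j := by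
    intro i j hi hj he
    rw [eZ i hi, eZ j hj] at he
    exact congrArg Fin.val (hZi he)
  have cr01' : ∀ ⦃i j : ℕ⦄, i ≤ lx → j ≤ ly →
      X ⟨min i lx, Nat.lt_succ_of_le (min_le_right _ _)⟩ =
      Y ⟨min j ly, Nat.lt_succ_of_le (min_le_right _ _)⟩ →
      (i = 0 ∧ j = 0) ∨ (i = lx ∧ j = ly) := by
    intro i j hi hj he
    rw [eX i hi, eY j hj] at he
    rcases cXY _ _ he with ⟨e1, e2⟩ | ⟨e1, e2⟩
    · have v1 := congrArg Fin.val e1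
      have v2 := congrArg Fin.val e2
      simp at v1 v2
      exact Or.inl ⟨v1, v2⟩
    · have v1 := congrArg Fin.val e1
      have v2 := congrArg Fin.val e2
      simp [Fin.last] at v1 v2
      exact Or.inr ⟨v1, v2⟩
  have cr02' : ∀ ⦃i j : ℕ⦄, i ≤ lx → j ≤ lz →
      X ⟨min i lx, Nat.lt_succ_of_le (min_le_right _ _)⟩ =
      Z ⟨min j lz, Nat.lt_succ_of_le (min_le_right _ _)⟩ →
      (i = 0 ∧ j = 0) ∨ (i = lx ∧ j = lz) := by
    intro i j hi hj he
    rw [eX i hi, eZ j hj] at he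
    rcases cXZ _ _ he with ⟨e1, e2⟩ | ⟨e1, e2⟩
    · have v1 := congrArg Fin.val e1
      have v2 := congrArg Fin.val e2
      simp at v1 v2
      exact Or.inl ⟨v1, v2⟩
    · have v1 := congrArg Fin.val e1
      have v2 := congrArg Fin.val e2
      simp [Fin.last] at v1 v2
      exact Or.inr ⟨v1, v2⟩
  have cr12' : ∀ ⦃i j : ℕ⦄, i ≤ ly → j ≤ lz →
      Y ⟨min i ly, Nat.lt_succ_of_le (min_le_right _ _)⟩ =
      Z ⟨min j lz, Nat.lt_succ_of_le (min_le_right _ _)⟩ →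
      (i = 0 ∧ j = 0) ∨ (i = ly ∧ j = lz) := by
    intro i j hi hj he
    rw [eY i hi, eZ j hj] at he
    rcases cYZ _ _ he with ⟨e1, e2⟩ | ⟨e1, e2⟩
    · have v1 := congrArg Fin.val e1
      have v2 := congrArg Fin.val e2
      simp at v1 v2
      exact Or.inl ⟨v1, v2⟩
    · have v1 := congrArg Fin.val e1
      have v2 := congrArg Fin.val e2
      simp [Fin.last] at v1 v2
      exact Or.inr ⟨v1, v2⟩
  have hadj' : ∀ u v, G.Adj u v ↔
      (∃ i, i < lx ∧ ((X ⟨min i lx, Nat.lt_succ_of_le (min_le_right _ _)⟩ = u ∧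
          X ⟨min (i+1) lx, Nat.lt_succ_of_le (min_le_right _ _)⟩ = v) ∨
        (X ⟨min i lx, Nat.lt_succ_of_le (min_le_right _ _)⟩ = v ∧
          X ⟨min (i+1) lx, Nat.lt_succ_of_le (min_le_right _ _)⟩ = u))) ∨
      (∃ i, i < ly ∧ ((Y ⟨min i ly, Nat.lt_succ_of_le (min_le_right _ _)⟩ = u ∧
          Y ⟨min (i+1) ly, Nat.lt_succ_of_le (min_le_right _ _)⟩ = v) ∨
        (Y ⟨min i ly, Nat.lt_succ_of_le (min_le_right _ _)⟩ = v ∧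
          Y ⟨min (i+1) ly, Nat.lt_succ_of_le (min_le_right _ _)⟩ = u))) ∨
      (∃ i, i < lz ∧ ((Z ⟨min i lz, Nat.lt_succ_of_le (min_le_right _ _)⟩ = u ∧
          Z ⟨min (i+1) lz, Nat.lt_succ_of_le (min_le_right _ _)⟩ = v) ∨
        (Z ⟨min i lz, Nat.lt_succ_of_le (min_le_right _ _)⟩ = v ∧
          Z ⟨min (i+1) lz, Nat.lt_succ_of_le (min_le_right _ _)⟩ = u))) := by
    intro u v
    rw [hadj u v]
    constructor
    · rintro (⟨i, H⟩ | ⟨i, H⟩ | ⟨i, H⟩)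
      · refine Or.inl ⟨i.val, i.isLt, ?_⟩
        rw [castX i, succX i]
        exact H
      · refine Or.inr (Or.inl ⟨i.val, i.isLt, ?_⟩)
        rw [castY i, succY i]
        exact H
      · refine Or.inr (Or.inr ⟨i.val, i.isLt, ?_⟩)
        rw [castZ i, succZ i]
        exact H
    · rintro (⟨i, hi, H⟩ | ⟨i, hi, H⟩ | ⟨i, hi, H⟩)
      · refine Or.inl ⟨⟨i, hi⟩, ?_⟩
        rw [castX ⟨i, hi⟩, succX ⟨i, hi⟩] at H
        exact H
      · refine Or.inr (Or.inl ⟨⟨i, hi⟩, ?_⟩)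
        rw [castY ⟨i, hi⟩, succY ⟨i, hi⟩] at H
        exact H
      · refine Or.inr (Or.inr ⟨⟨i, hi⟩, ?_⟩)
        rw [castZ ⟨i, hi⟩, succZ ⟨i, hi⟩] at H
        exact H
  have hcov' : ∀ v,
      (∃ i, i ≤ lx ∧ X ⟨min i lx, Nat.lt_succ_of_le (min_le_right _ _)⟩ = v) ∨
      (∃ i, i ≤ ly ∧ Y ⟨min i ly, Nat.lt_succ_of_le (min_le_right _ _)⟩ = v) ∨
      (∃ i, i ≤ lz ∧ Z ⟨min i lz, Nat.lt_succ_of_le (min_le_right _ _)⟩ = v) := by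
    intro v
    rcases hcov v with ⟨i, hv⟩ | ⟨i, hv⟩ | ⟨i, hv⟩
    · refine Or.inl ⟨i.val, by omega, ?_⟩
      rw [eX i.val (by omega)]
      rw [show (⟨i.val, Nat.lt_succ_of_le (by omega)⟩ : Fin (lx+1)) = i from Fin.ext rfl]
      exact hv
    · refine Or.inr (Or.inl ⟨i.val, by omega, ?_⟩)
      rw [eY i.val (by omega)]
      rw [show (⟨i.val, Nat.lt_succ_of_le (by omega)⟩ : Fin (ly+1)) = i from Fin.ext rfl]
      exact hv
    · refine Or.inr (Or.inr ⟨i.val, by omega, ?_⟩)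
      rw [eZ i.val (by omega)]
      rw [show (⟨i.val, Nat.lt_succ_of_le (by omega)⟩ : Fin (lz+1)) = i from Fin.ext rfl]
      exact hv
  let td : TD V G := TD.mk3
    (fun i => X ⟨min i lx, Nat.lt_succ_of_le (min_le_right _ _)⟩)
    (fun i => Y ⟨min i ly, Nat.lt_succ_of_le (min_le_right _ _)⟩)
    (fun i => Z ⟨min i lz, Nat.lt_succ_of_le (min_le_right _ _)⟩)
    lx ly lz (X 0) (X (Fin.last lx)) hx hly hlz
    h00' h10' h20' h0l' h1l' h2l' inj0' inj1' inj2' cr01' cr02' cr12' hadj' hcov'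
  have : Finite V := td.finiteV
  obtain ⟨f, hf⟩ := fourPoint_of_model hand
  have hne : f td.a ≠ f td.b := fne hf td.ne_ab
  rcases lt_or_gt_of_ne hne with h1 | h1
  · exact core td hf h1
  · exact core td.rev hf h1
end
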